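/- arXiv:2103.09256 — 4 statements merged into one kernel-verified Lean document; each statement's English description precedes it below -/
import Mathlib

section
/- For all n ≥ 2 and k ≥ 1, the k-sided pancake network — the directed graph whose vertex set is CPERMS(n,k), with a directed edge from π to flip_j(π) for every π ∈ CPERMS(n,k) and every 1 ≤ j ≤ n — has a directed Hamilton cycle: there exists a cyclic ordering π_1, π_2, …, π_{k^n·n!} of all elements of CPERMS(n,k) such that for each i (indices modulo k^n·n!), π_{i+1} = flip_{j_i}(π_i) for some 1 ≤ j_i ≤ n. -/
/-- Increment the colour of every symbol of a coloured pre-permutation by `s`, modulo `k`. -/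
def colShift (k s : ℕ) (p : List (ℕ × ℕ)) : List (ℕ × ℕ) :=
  p.map (fun x => (x.1, (x.2 + s) % k))

/-- The colour-incrementing prefix-reversal of length `j` (a "flip"):
reverse the first `j` symbols and increment their colours by 1 modulo `k`. -/
def cflip (k j : ℕ) (p : List (ℕ × ℕ)) : List (ℕ × ℕ) :=
  colShift k 1 (p.take j).reverse ++ p.drop j

/-- `p` is a `k`-coloured permutation of order `n`: its values are a permutation
of `{1,…,n}` and all its colours lie in `{0,…,k-1}`. -/
def IsCPerm (n k : ℕ) (p : List (ℕ × ℕ)) : Prop :=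
  (p.map Prod.fst).Perm ((List.range n).map (· + 1)) ∧ ∀ x ∈ p, x.2 < k

/-- `p` is a pre-perm: distinct values from `{1,…,n}`, colours in `{0,…,k-1}`. -/
def IsPrePerm (n k : ℕ) (p : List (ℕ × ℕ)) : Prop :=
  (p.map Prod.fst).Nodup ∧ ∀ x ∈ p, (1 ≤ x.1 ∧ x.1 ≤ n) ∧ x.2 < k

/-- The circular string `ρ(p) = p^{+(k-1)} · p^{+(k-2)} ⋯ p^{+0}`. -/
def rho (k : ℕ) (p : List (ℕ × ℕ)) : List (ℕ × ℕ) :=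
  ((List.range k).reverse).flatMap (fun s => colShift k s p)

/-- `ρ(p)_i`: the length `j-1` contiguous subword of the circular string `ρ(p)`
ending with `r_{i-1}` (1-based indices modulo `m = k·j`, where `j = p.length`). -/
def rhoSub (k : ℕ) (p : List (ℕ × ℕ)) (i : ℕ) : List (ℕ × ℕ) :=
  (List.range (p.length - 1)).map
    (fun t => (rho k p).getD ((i + t + k * p.length - p.length) % (k * p.length)) (0, 0))

/-- Fuel-indexed version of the recursive listing `Rec(p,k)`; `fuel = p.length`. -/
def RecAux (k : ℕ) : ℕ → List (ℕ × ℕ) → List (List (ℕ × ℕ))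
  | 0, p => (List.range k).map (fun s => colShift k s p)
  | fuel + 1, p =>
    if p.length ≤ 1 then (List.range k).map (fun s => colShift k s p)
    else ((List.range (k * p.length)).reverse).flatMap
      (fun i => (RecAux k fuel (rhoSub k p (i + 1))).map (fun q => q ++ [(rho k p).getD i (0, 0)]))

/-- The recursive listing `Rec(p,k)`:
`Rec(p₁,k) = p₁, p₁^{+1}, …, p₁^{+(k-1)}` when `p` has length 1, and
`Rec(p,k) = Rec(ρ(p)_m,k)·r_m, Rec(ρ(p)_{m-1},k)·r_{m-1}, …, Rec(ρ(p)_1,k)·r_1` otherwise. -/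
def RecList (k : ℕ) (p : List (ℕ × ℕ)) : List (List (ℕ × ℕ)) :=
  RecAux k p.length p

/-- The identity coloured permutation `1⁰2⁰⋯n⁰`. -/
def idPerm (n : ℕ) : List (ℕ × ℕ) := (List.range n).map (fun i => (i + 1, 0))


section Helpers

variable {α β : Type*}

lemma flatMap_length_const (l : List α) (g : α → List β) (N : ℕ)
    (h : ∀ a ∈ l, (g a).length = N) : (l.flatMap g).length = l.length * N := by
  induction l with
  | nil => simp
  | cons a l ih =>
    simp only [List.flatMap_cons, List.length_append, h a (by simp), List.length_cons,
      ih (fun a ha => h a (by simp [ha]))]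
    ring

lemma flatMap_getD (l : List α) (g : α → List β) (N : ℕ)
    (h : ∀ a ∈ l, (g a).length = N) (q : ℕ) (hq : q < l.length * N) (d : β) (dα : α) :
    (l.flatMap g).getD q d = (g (l.getD (q / N) dα)).getD (q % N) d := by
  induction l generalizing q with
  | nil => simp at hq
  | cons a l ih =>
    have hN : 0 < N := by
      rcases Nat.eq_zero_or_pos N with h0 | h0
      · simp [h0] at hq
      · exact h0
    by_cases hqN : q < N
    · have hdv : q / N = 0 := Nat.div_eq_of_lt hqN
      have hmd : q % N = q := Nat.mod_eq_of_lt hqN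
      rw [List.flatMap_cons, hdv, hmd]
      simp only [List.getD_eq_getElem?_getD]
      rw [List.getElem?_append_left (by rw [h a (by simp)]; exact hqN)]
      simp
    · push_neg at hqN
      have hlen : (g a).length = N := h a (by simp)
      rw [List.flatMap_cons]
      simp only [List.getD_eq_getElem?_getD]
      rw [List.getElem?_append_right (by omega)]
      have h1 : q / N = (q - N) / N + 1 := Nat.div_eq_sub_div hN hqN
      have h2 : q % N = (q - N) % N := Nat.mod_eq_sub_mod hqN
      rw [hlen, h1, h2]
      have hq' : q - N < l.length * N := by
        have hexp : (a :: l).length * N = l.length * N + N := by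
          simp [Nat.succ_mul]
        omega
      have := ih (fun a ha => h a (by simp [ha])) (q - N) hq' 
      simp only [List.getD_eq_getElem?_getD] at this
      rw [this]
      simp

lemma map_range_getD (l : List α) (d : α) :
    (List.range l.length).map (fun t => l.getD t d) = l := by
  apply List.ext_getElem (by simp)
  intro n h1 h2
  simp only [List.getElem_map, List.getElem_range]
  rw [List.getD_eq_getElem l d h2]

lemma getD_range_reverse (k a : ℕ) (ha : a < k) :
    ((List.range k).reverse.getD a 0) = k - 1 - a := by
  rw [List.getD_eq_getElem _ _ (by simpa using ha)]
  rw [List.getElem_reverse]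
  simp

end Helpers

section ColShift

lemma colShift_length (k s : ℕ) (p : List (ℕ × ℕ)) : (colShift k s p).length = p.length := by
  simp [colShift]

lemma colShift_getD (k s : ℕ) (p : List (ℕ × ℕ)) (t : ℕ) (ht : t < p.length) :
    (colShift k s p).getD t (0,0) =
      ((p.getD t (0,0)).1, ((p.getD t (0,0)).2 + s) % k) := by
  rw [List.getD_eq_getElem _ _ (by simpa [colShift] using ht),
    List.getD_eq_getElem _ _ ht]
  simp [colShift]

lemma colShift_zero {k : ℕ} {p : List (ℕ × ℕ)} (h : ∀ x ∈ p, x.2 < k) :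
    colShift k 0 p = p := by
  unfold colShift
  conv_rhs => rw [← List.map_id p]
  apply List.map_congr_left
  intro x hx
  simp [Nat.mod_eq_of_lt (h x hx)]

lemma colShift_append (k s : ℕ) (p q : List (ℕ × ℕ)) :
    colShift k s (p ++ q) = colShift k s p ++ colShift k s q := by simp [colShift]

lemma colShift_reverse (k s : ℕ) (p : List (ℕ × ℕ)) :
    colShift k s p.reverse = (colShift k s p).reverse := by simp [colShift]

lemma colShift_one_last {k : ℕ} (hk : 0 < k) (p : List (ℕ × ℕ)) (h : ∀ x ∈ p, x.2 < k) :
    colShift k 1 (colShift k (k-1) p) = p := by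
  unfold colShift
  rw [List.map_map]
  conv_rhs => rw [← List.map_id p]
  apply List.map_congr_left
  intro x hx
  simp only [Function.comp, id]
  have hx2 := h x hx
  have : ((x.2 + (k-1)) % k + 1) % k = x.2 := by
    rw [Nat.mod_add_mod]
    have : x.2 + (k - 1) + 1 = x.2 + k := by omega
    rw [this, Nat.add_mod_right, Nat.mod_eq_of_lt hx2]
  rw [this]

lemma colShift_map_fst (k s : ℕ) (p : List (ℕ × ℕ)) :
    (colShift k s p).map Prod.fst = p.map Prod.fst := by
  simp [colShift]

end ColShift

lemma rep_div {j a b : ℕ} (hj : 0 < j) (hb : b < j) : (a * j + b) / j = a := by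
  rw [add_comm, Nat.add_mul_div_right _ _ hj, Nat.div_eq_of_lt hb, Nat.zero_add]

lemma rep_mod {j a b : ℕ} (hb : b < j) : (a * j + b) % j = b := by
  rw [mul_comm, Nat.mul_add_mod, Nat.mod_eq_of_lt hb]

section Rho

variable {k : ℕ} {p : List (ℕ × ℕ)}

lemma rho_length : (rho k p).length = k * p.length := by
  unfold rho
  rw [flatMap_length_const _ _ p.length (fun a _ => colShift_length _ _ _)]
  simp

lemma rho_getD (hk : 0 < k) (q : ℕ) (hq : q < k * p.length) :
    (rho k p).getD q (0,0) =
      ((p.getD (q % p.length) (0,0)).1,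
       ((p.getD (q % p.length) (0,0)).2 + (k - 1 - q / p.length)) % k) := by
  have hj : 0 < p.length := by
    rcases Nat.eq_zero_or_pos p.length with h | h
    · rw [h, Nat.mul_zero] at hq; omega
    · exact h
  unfold rho
  rw [flatMap_getD _ _ p.length (fun a _ => colShift_length _ _ _) q
    (by simpa using hq) (0,0) 0]
  have hdiv : q / p.length < k := (Nat.div_lt_iff_lt_mul hj).mpr (by omega)
  rw [getD_range_reverse k _ hdiv, colShift_getD _ _ _ _ (Nat.mod_lt _ hj)]

lemma rho_col (hk : 0 < k) : ∀ x ∈ rho k p, x.2 < k := by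
  intro x hx
  unfold rho at hx
  simp only [List.mem_flatMap] at hx
  obtain ⟨s, _, hx⟩ := hx
  unfold colShift at hx
  simp only [List.mem_map] at hx
  obtain ⟨y, _, rfl⟩ := hx
  exact Nat.mod_lt _ hk

lemma rho_getD_col (hk : 0 < k) (hp : p ≠ []) (q : ℕ) (hq : q < k * p.length) :
    ((rho k p).getD q (0,0)).2 < k := by
  have hlt : q < (rho k p).length := by rw [rho_length]; exact hq
  rw [List.getD_eq_getElem _ _ hlt]
  exact rho_col hk _ (List.getElem_mem hlt)

lemma rho_shift (hk : 0 < k) (q : ℕ) (hq : q < k * p.length) :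
    (rho k p).getD ((q + (k * p.length - p.length)) % (k * p.length)) (0,0) =
      (((rho k p).getD q (0,0)).1, (((rho k p).getD q (0,0)).2 + 1) % k) := by
  have hj : 0 < p.length := by
    rcases Nat.eq_zero_or_pos p.length with h | h
    · rw [h, Nat.mul_zero] at hq; omega
    · exact h
  have hkk : k * p.length = (k-1) * p.length + p.length := by
    have : (k-1) * p.length = k * p.length - p.length := by
      rw [Nat.sub_mul, Nat.one_mul]
    have hjm : p.length ≤ k * p.length := Nat.le_mul_of_pos_left _ hk
    omega
  obtain ⟨a, b, hb, rfl⟩ : ∃ a b, b < p.length ∧ q = a * p.length + b :=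
    ⟨q / p.length, q % p.length, Nat.mod_lt _ hj, (Nat.div_add_mod' q p.length).symm⟩
  have ha : a < k := by
    by_contra hcon
    push_neg at hcon
    have : k * p.length ≤ a * p.length := Nat.mul_le_mul_right _ hcon
    omega
  rw [rho_getD hk _ hq, rep_div hj hb, rep_mod hb]
  rcases Nat.eq_zero_or_pos a with rfl | hapos
  · -- a = 0
    have hidx : (0 * p.length + b + (k * p.length - p.length)) % (k * p.length)
        = (k-1) * p.length + b := by
      have h1 : 0 * p.length + b + (k * p.length - p.length) = (k-1) * p.length + b := by
        omega
      rw [h1, Nat.mod_eq_of_lt (by omega)]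
    rw [hidx, rho_getD hk _ (by omega), rep_div hj hb, rep_mod hb]
    refine congrArg₂ Prod.mk rfl ?_
    show ((p.getD b (0,0)).2 + (k - 1 - (k-1))) % k
      = (((p.getD b (0,0)).2 + (k - 1 - 0)) % k + 1) % k
    rw [Nat.mod_add_mod]
    have h2 : (p.getD b (0,0)).2 + (k - 1 - 0) + 1 = (p.getD b (0,0)).2 + k := by omega
    rw [h2, Nat.add_mod_right, Nat.sub_self, Nat.add_zero]
  · -- a ≥ 1
    have haj : a * p.length = (a-1) * p.length + p.length := by
      have : (a-1) * p.length = a * p.length - p.length := by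
        rw [Nat.sub_mul, Nat.one_mul]
      have : p.length ≤ a * p.length := Nat.le_mul_of_pos_left _ hapos
      omega
    have hmono : (a-1) * p.length ≤ (k-1) * p.length :=
      Nat.mul_le_mul_right _ (by omega)
    have hidx : (a * p.length + b + (k * p.length - p.length)) % (k * p.length)
        = (a-1) * p.length + b := by
      have h1 : a * p.length + b + (k * p.length - p.length)
          = ((a-1) * p.length + b) + k * p.length := by omega
      rw [h1, Nat.add_mod_right, Nat.mod_eq_of_lt (by omega)]
    rw [hidx, rho_getD hk _ (by omega), rep_div hj hb, rep_mod hb]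
    refine congrArg₂ Prod.mk rfl ?_
    show ((p.getD b (0,0)).2 + (k - 1 - (a-1))) % k
      = (((p.getD b (0,0)).2 + (k - 1 - a)) % k + 1) % k
    rw [Nat.mod_add_mod]
    congr 1
    omega

end Rho

/-- The window of length `p.length` of the circular word `ρ(p)` ending at position `i`. -/
def Wl (k : ℕ) (p : List (ℕ × ℕ)) (i : ℕ) : List (ℕ × ℕ) :=
  (List.range p.length).map
    (fun t => (rho k p).getD ((i + 1 + t + k * p.length - p.length) % (k * p.length)) (0,0))

section RhoSub

variable {k : ℕ} {p : List (ℕ × ℕ)}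

lemma rhoSub_length (i : ℕ) : (rhoSub k p i).length = p.length - 1 := by simp [rhoSub]

lemma rhoSub_col (hk : 0 < k) (i : ℕ) : ∀ x ∈ rhoSub k p i, x.2 < k := by
  intro x hx
  unfold rhoSub at hx
  simp only [List.mem_map, List.mem_range] at hx
  obtain ⟨t, ht, rfl⟩ := hx
  have hj : 0 < p.length := by omega
  have hm : 0 < k * p.length := Nat.mul_pos hk hj
  exact rho_getD_col hk (List.length_pos_iff.mp hj) _ (Nat.mod_lt _ hm)

lemma block_eq (hk : 0 < k) (hp : p ≠ []) (i : ℕ) (hi : i < k * p.length) :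
    rhoSub k p (i+1) ++ [(rho k p).getD i (0,0)] = Wl k p i := by
  have hj : 0 < p.length := List.length_pos_iff.mpr hp
  have hjm : p.length ≤ k * p.length := Nat.le_mul_of_pos_left _ hk
  unfold Wl
  have hrange2 : List.range p.length = List.range (p.length - 1) ++ [p.length - 1] := by
    conv_lhs => rw [show p.length = (p.length - 1) + 1 by omega]
    exact List.range_succ
  rw [hrange2, List.map_append]
  congr 1
  simp only [List.map_cons, List.map_nil, List.cons.injEq, and_true]
  have hidx : i + 1 + (p.length - 1) + k * p.length - p.length = i + k * p.length := by
    omega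
  rw [hidx, Nat.add_mod_right, Nat.mod_eq_of_lt hi]

lemma Wl_last (hk : 0 < k) (hp : p ≠ []) (hcol : ∀ x ∈ p, x.2 < k) :
    Wl k p (k * p.length - 1) = p := by
  have hj : 0 < p.length := List.length_pos_iff.mpr hp
  have hkk : k * p.length = (k-1) * p.length + p.length := by
    have : (k-1) * p.length = k * p.length - p.length := by
      rw [Nat.sub_mul, Nat.one_mul]
    have hjm : p.length ≤ k * p.length := Nat.le_mul_of_pos_left _ hk
    omega
  unfold Wl
  conv_rhs => rw [← map_range_getD p (0,0)]
  apply List.map_congr_left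
  intro t ht
  rw [List.mem_range] at ht
  have hidx : (k * p.length - 1 + 1 + t + k * p.length - p.length) % (k * p.length)
      = (k-1) * p.length + t := by
    have h1 : k * p.length - 1 + 1 + t + k * p.length - p.length
        = ((k-1) * p.length + t) + k * p.length := by omega
    rw [h1, Nat.add_mod_right, Nat.mod_eq_of_lt (by omega)]
  rw [hidx, rho_getD hk _ (by omega), rep_div hj ht, rep_mod ht]
  have hcolt : (p.getD t (0,0)).2 < k := by
    have : p.getD t (0,0) ∈ p := by
      rw [List.getD_eq_getElem _ _ ht]; exact List.getElem_mem ht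
    exact hcol _ this
  rw [Nat.sub_self, Nat.add_zero, Nat.mod_eq_of_lt hcolt]

lemma cross (hk : 0 < k) (hp : p ≠ []) (i : ℕ) (hi : i < k * p.length) :
    cflip k p.length
      (colShift k (k-1) (rhoSub k p (i+1)).reverse ++ [(rho k p).getD i (0,0)]) =
    Wl k p ((i + k * p.length - 1) % (k * p.length)) := by
  have hj : 0 < p.length := List.length_pos_iff.mpr hp
  have hjm : p.length ≤ k * p.length := Nat.le_mul_of_pos_left _ hk
  have hm : 0 < k * p.length := Nat.mul_pos hk hj
  have hlen : (colShift k (k-1) (rhoSub k p (i+1)).reverse ++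
      [(rho k p).getD i (0,0)]).length = p.length := by
    simp only [List.length_append, colShift_length, List.length_reverse, rhoSub_length,
      List.length_singleton]
    omega
  unfold cflip
  rw [List.take_of_length_le (le_of_eq hlen), List.drop_eq_nil_of_le (le_of_eq hlen),
    List.append_nil, List.reverse_append, List.reverse_singleton,
    ← colShift_reverse, List.reverse_reverse, List.singleton_append]
  rw [show ((rho k p).getD i (0,0) :: colShift k (k-1) (rhoSub k p (i+1)))
    = [(rho k p).getD i (0,0)] ++ colShift k (k-1) (rhoSub k p (i+1)) from rfl,
    colShift_append, colShift_one_last hk _ (rhoSub_col hk _)]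
  rw [show colShift k 1 [(rho k p).getD i (0,0)]
    = [((((rho k p).getD i (0,0))).1, ((((rho k p).getD i (0,0))).2 + 1) % k)] from rfl,
    List.singleton_append]
  unfold Wl
  have hrange : List.range p.length = 0 :: List.map Nat.succ (List.range (p.length - 1)) := by
    conv_lhs => rw [show p.length = (p.length - 1) + 1 by omega]
    exact List.range_succ_eq_map
  rw [hrange, List.map_cons, List.map_map, List.cons.injEq]
  refine ⟨?_, ?_⟩
  · -- head
    have hidx : ((i + k * p.length - 1) % (k * p.length) + 1 + 0 + k * p.length - p.length)
        % (k * p.length) = (i + (k * p.length - p.length)) % (k * p.length) := by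
      have h1 : (i + k * p.length - 1) % (k * p.length) + 1 + 0 + k * p.length - p.length
          = (i + k * p.length - 1) % (k * p.length) + (1 + (k * p.length - p.length)) := by
        omega
      rw [h1, Nat.mod_add_mod]
      have h2 : i + k * p.length - 1 + (1 + (k * p.length - p.length))
          = (i + (k * p.length - p.length)) + k * p.length := by omega
      rw [h2, Nat.add_mod_right]
    rw [hidx, rho_shift hk i hi]
  · -- tail
    unfold rhoSub
    apply List.map_congr_left
    intro t ht
    rw [List.mem_range] at ht
    simp only [Function.comp_apply, Nat.succ_eq_add_one]
    congr 1
    have h1 : (i + k * p.length - 1) % (k * p.length) + 1 + (t + 1) + k * p.length - p.length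
        = (i + k * p.length - 1) % (k * p.length) + (t + 2 + (k * p.length - p.length)) := by
      omega
    rw [h1, Nat.mod_add_mod]
    have h2 : i + k * p.length - 1 + (t + 2 + (k * p.length - p.length))
        = (i + 1 + t + k * p.length - p.length) + k * p.length := by omega
    rw [h2, Nat.add_mod_right]

lemma rhoSub_one (hk : 0 < k) (hp : p ≠ []) (hcol : ∀ x ∈ p, x.2 < k) :
    rhoSub k p 1 = p.drop 1 := by
  have hj : 0 < p.length := List.length_pos_iff.mpr hp
  have hkk : k * p.length = (k-1) * p.length + p.length := by
    have : (k-1) * p.length = k * p.length - p.length := by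
      rw [Nat.sub_mul, Nat.one_mul]
    have hjm : p.length ≤ k * p.length := Nat.le_mul_of_pos_left _ hk
    omega
  apply List.ext_getElem (by simp [rhoSub])
  intro t h1 h2
  have h1' : t < p.length - 1 := by simpa [rhoSub] using h1
  simp only [rhoSub, List.getElem_map, List.getElem_range]
  have ht1 : 1 + t < p.length := by omega
  have hidx : (1 + t + k * p.length - p.length) % (k * p.length)
      = (k-1) * p.length + (1 + t) := by
    have ha : 1 + t + k * p.length - p.length = (k-1) * p.length + (1 + t) := by omega
    rw [ha, Nat.mod_eq_of_lt (by omega)]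
  rw [hidx, rho_getD hk _ (by omega), rep_div hj ht1, rep_mod ht1]
  have hcolt : (p.getD (1+t) (0,0)).2 < k := by
    have : p.getD (1+t) (0,0) ∈ p := by
      rw [List.getD_eq_getElem _ _ ht1]; exact List.getElem_mem ht1
    exact hcol _ this
  rw [Nat.sub_self, Nat.add_zero, Nat.mod_eq_of_lt hcolt]
  rw [List.getD_eq_getElem _ _ ht1]
  have : (List.drop 1 p)[t] = p[1 + t] := by
    rw [List.getElem_drop]
  rw [this]

lemma last_block (hk : 0 < k) (hp : p ≠ []) (hcol : ∀ x ∈ p, x.2 < k) :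
    colShift k (k-1) (rhoSub k p 1).reverse ++ [(rho k p).getD 0 (0,0)]
      = colShift k (k-1) p.reverse := by
  have hj : 0 < p.length := List.length_pos_iff.mpr hp
  rw [rhoSub_one hk hp hcol]
  have h0 : (rho k p).getD 0 (0,0)
      = ((p.getD 0 (0,0)).1, ((p.getD 0 (0,0)).2 + (k-1)) % k) := by
    rw [rho_getD hk 0 (Nat.mul_pos hk hj), Nat.zero_mod, Nat.zero_div, Nat.sub_zero]
  rw [h0]
  have hrev : p.reverse = (p.drop 1).reverse ++ [p.getD 0 (0,0)] := by
    cases p with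
    | nil => exact absurd rfl hp
    | cons a l => simp
  rw [hrev, colShift_append]
  congr 1

end RhoSub

lemma cflip_append_last (k j : ℕ) (x : List (ℕ × ℕ)) (y : ℕ × ℕ) (h : j ≤ x.length) :
    cflip k j (x ++ [y]) = cflip k j x ++ [y] := by
  unfold cflip
  rw [List.take_append_of_le_length h, List.drop_append_of_le_length h, List.append_assoc]

lemma step1 (k i : ℕ) (x : ℕ × ℕ) :
    cflip k 1 (colShift k i [x]) = colShift k ((i+1) % k) [x] := by
  show cflip k 1 [(x.1, (x.2 + i) % k)] = [(x.1, (x.2 + (i+1) % k) % k)]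
  unfold cflip colShift
  simp only [List.take_succ_cons, List.take_nil, List.reverse_cons, List.reverse_nil,
    List.nil_append, List.map_cons, List.map_nil, List.drop_succ_cons, List.drop_nil,
    List.append_nil, List.cons.injEq, and_true]
  refine congrArg₂ Prod.mk rfl ?_
  rw [Nat.add_mod_mod, Nat.mod_add_mod]
  rfl

lemma recAux_base (k : ℕ) (hk : 0 < k) (p : List (ℕ × ℕ)) (hp1 : p.length = 1)
    (hcol : ∀ x ∈ p, x.2 < k) :
    (RecAux k 0 p).length = k ∧
    (RecAux k 0 p).getD 0 [] = p ∧
    (RecAux k 0 p).getD ((RecAux k 0 p).length - 1) [] = colShift k (k-1) p.reverse ∧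
    (∀ q ∈ RecAux k 0 p, q.length = p.length) ∧
    (∀ i < (RecAux k 0 p).length, ∃ j, 1 ≤ j ∧ j ≤ p.length ∧
      (RecAux k 0 p).getD ((i+1) % (RecAux k 0 p).length) [] =
        cflip k j ((RecAux k 0 p).getD i [])) := by
  obtain ⟨x, rfl⟩ := List.length_eq_one_iff.mp hp1
  have hx : x.2 < k := hcol x (by simp)
  have hlen : (RecAux k 0 [x]).length = k := by simp [RecAux]
  have hget : ∀ i < k, (RecAux k 0 [x]).getD i [] = colShift k i [x] := by
    intro i hi
    show ((List.range k).map (fun s => colShift k s [x])).getD i [] = _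
    rw [List.getD_eq_getElem _ _ (by simpa using hi), List.getElem_map, List.getElem_range]
  refine ⟨hlen, ?_, ?_, ?_, ?_⟩
  · rw [hget 0 hk]
    exact colShift_zero hcol
  · rw [hlen, hget (k-1) (by omega)]
    rw [List.reverse_singleton]
  · intro q hq
    simp only [RecAux, List.mem_map] at hq
    obtain ⟨s, _, rfl⟩ := hq
    simp [colShift_length]
  · intro i hi
    rw [hlen] at hi
    refine ⟨1, le_refl 1, by simp, ?_⟩
    rw [hlen, hget i hi, hget ((i+1) % k) (Nat.mod_lt _ hk)]
    exact (step1 k i x).symm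

lemma recAux_struct (k : ℕ) (hk : 0 < k) : ∀ (f : ℕ) (p : List (ℕ × ℕ)),
    p.length = f → p ≠ [] → (∀ x ∈ p, x.2 < k) →
    (RecAux k f p).length = k ^ p.length * p.length.factorial ∧
    (RecAux k f p).getD 0 [] = p ∧
    (RecAux k f p).getD ((RecAux k f p).length - 1) [] = colShift k (k-1) p.reverse ∧
    (∀ q ∈ RecAux k f p, q.length = p.length) ∧
    (∀ i < (RecAux k f p).length, ∃ j, 1 ≤ j ∧ j ≤ p.length ∧
      (RecAux k f p).getD ((i+1) % (RecAux k f p).length) [] =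
        cflip k j ((RecAux k f p).getD i [])) := by
  intro f
  induction f with
  | zero =>
    intro p hlen hne _
    exact absurd (List.length_eq_zero_iff.mp hlen) hne
  | succ f ih =>
    intro p hlen hne hcol
    by_cases hle : p.length ≤ 1
    · -- base behaviour
      have hp1 : p.length = 1 := by
        have := List.length_pos_iff.mpr hne; omega
      have hbase : RecAux k (f+1) p = RecAux k 0 p := by
        simp only [RecAux, if_pos hle]
      rw [hbase]
      have h := recAux_base k hk p hp1 hcol
      rw [hp1]
      simpa [hp1] using h
    · -- recursive case
      push_neg at hle
      have hj : 0 < p.length := by omega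
      have hj2 : 2 ≤ p.length := hle
      have hm : 0 < k * p.length := Nat.mul_pos hk hj
      have hjm : p.length ≤ k * p.length := Nat.le_mul_of_pos_left _ hk
      have hrec : RecAux k (f+1) p = ((List.range (k * p.length)).reverse).flatMap
          (fun i => (RecAux k f (rhoSub k p (i + 1))).map
            (fun q => q ++ [(rho k p).getD i (0, 0)])) := by
        rw [RecAux, if_neg (by omega)]
      have hsublen : ∀ i : ℕ, (rhoSub k p (i+1)).length = f := by
        intro i; rw [rhoSub_length]; omega
      have hsubne : ∀ i : ℕ, rhoSub k p (i+1) ≠ [] := by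
        intro i; apply List.ne_nil_of_length_pos; rw [rhoSub_length]; omega
      have ihi := fun i : ℕ => ih (rhoSub k p (i+1)) (hsublen i) (hsubne i) (rhoSub_col hk _)
      set N := k ^ (p.length - 1) * (p.length - 1).factorial with hNdef
      have hN : 0 < N := Nat.mul_pos (Nat.pow_pos hk) (Nat.factorial_pos _)
      have hinnerlen : ∀ i : ℕ, (RecAux k f (rhoSub k p (i+1))).length = N := by
        intro i
        have h1 := (ihi i).1
        rw [rhoSub_length] at h1
        exact h1
      have hinnerD : ∀ i : ℕ, ∀ q ∈ RecAux k f (rhoSub k p (i+1)), q.length = p.length - 1 := by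
        intro i q hq
        have := (ihi i).2.2.2.1 q hq
        rwa [rhoSub_length] at this
      have hBlen : ∀ a ∈ (List.range (k * p.length)).reverse,
          ((fun i => (RecAux k f (rhoSub k p (i + 1))).map
            (fun q => q ++ [(rho k p).getD i (0, 0)])) a).length = N := by
        intro a _
        simp only [List.length_map]
        exact hinnerlen a
      have hLlen : (RecAux k (f+1) p).length = (k * p.length) * N := by
        rw [hrec, flatMap_length_const _ _ N hBlen]
        simp
      have hgetD : ∀ q, q < (k * p.length) * N →
          (RecAux k (f+1) p).getD q [] =
            (RecAux k f (rhoSub k p ((k * p.length - 1 - q / N) + 1))).getD (q % N) []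
              ++ [(rho k p).getD (k * p.length - 1 - q / N) (0, 0)] := by
        intro q hq
        rw [hrec, flatMap_getD _ _ N hBlen q (by simpa using hq) [] 0]
        rw [getD_range_reverse _ _ ((Nat.div_lt_iff_lt_mul hN).mpr hq)]
        have hq2 : q % N < N := Nat.mod_lt _ hN
        rw [List.getD_eq_getElem _ _ (by rw [List.length_map, hinnerlen]; exact hq2),
          List.getElem_map, ← List.getD_eq_getElem]
      have hfst : (RecAux k (f+1) p).getD 0 [] = p := by
        rw [hgetD 0 (Nat.mul_pos hm hN), Nat.zero_div, Nat.zero_mod, Nat.sub_zero]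
        rw [(ihi _).2.1]
        rw [block_eq hk hne _ (by omega)]
        exact Wl_last hk hne hcol
      have hmulN : (k * p.length - 1) * N + N = (k * p.length) * N := by
        have h2 : (k * p.length - 1 + 1) * N = (k * p.length - 1) * N + N :=
          Nat.succ_mul _ _
        rw [show k * p.length - 1 + 1 = k * p.length by omega] at h2
        omega
      have hNm1 : (k * p.length) * N - 1 = (k * p.length - 1) * N + (N - 1) := by
        have := Nat.mul_pos hm hN
        omega
      have hlst : (RecAux k (f+1) p).getD ((k * p.length) * N - 1) []
          = colShift k (k-1) p.reverse := by
        have hq : (k * p.length) * N - 1 < (k * p.length) * N := by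
          have := Nat.mul_pos hm hN; omega
        rw [hgetD _ hq, hNm1, rep_div hN (by omega), rep_mod (by omega), Nat.sub_self]
        have hc := (ihi 0).2.2.1
        rw [hinnerlen 0] at hc
        rw [hc]
        simpa using last_block hk hne hcol
      have hD : ∀ q ∈ RecAux k (f+1) p, q.length = p.length := by
        intro q hq
        rw [hrec, List.mem_flatMap] at hq
        obtain ⟨a, _, hq⟩ := hq
        rw [List.mem_map] at hq
        obtain ⟨q', hq', rfl⟩ := hq
        rw [List.length_append, hinnerD a q' hq', List.length_singleton]
        omega
      refine ⟨?_, hfst, ?_, hD, ?_⟩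
      · -- length
        rw [hLlen, hNdef]
        have hpow : k ^ p.length = k ^ (p.length - 1) * k := by
          conv_lhs => rw [show p.length = (p.length - 1) + 1 by omega]
          rw [pow_succ]
        have hfac : p.length.factorial = p.length * (p.length - 1).factorial := by
          conv_lhs => rw [show p.length = (p.length - 1) + 1 by omega]
          rw [Nat.factorial_succ]
          congr 1
          omega
        rw [hpow, hfac]
        ring
      · rw [hLlen]
        exact hlst
      · -- adjacency
        intro idx hidx
        rw [hLlen] at hidx
        obtain ⟨t, r, ht, hr, rfl⟩ : ∃ t r, t < k * p.length ∧ r < N ∧ idx = t * N + r := by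
          refine ⟨idx / N, idx % N, (Nat.div_lt_iff_lt_mul hN).mpr hidx, Nat.mod_lt _ hN, ?_⟩
          have h := Nat.div_add_mod idx N
          rw [Nat.mul_comm] at h
          omega
        have hdiv : (t * N + r) / N = t := rep_div hN hr
        have hmod : (t * N + r) % N = r := rep_mod hr
        have hmulleft : ∀ a b : ℕ, a ≤ b → a * N ≤ b * N := fun a b hab =>
          Nat.mul_le_mul_right _ hab
        have hgetidx := hgetD _ hidx
        rw [hdiv, hmod] at hgetidx
        have hinmem : (RecAux k f (rhoSub k p ((k * p.length - 1 - t) + 1))).getD r []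
            ∈ RecAux k f (rhoSub k p ((k * p.length - 1 - t) + 1)) := by
          rw [List.getD_eq_getElem _ _ (by rw [hinnerlen]; exact hr)]
          exact List.getElem_mem _
        by_cases hrN : r + 1 < N
        · -- inside a block
          obtain ⟨j', hj'1, hj'2, hj'3⟩ := (ihi (k * p.length - 1 - t)).2.2.2.2 r
            (by rw [hinnerlen]; exact hr)
          rw [hinnerlen, Nat.mod_eq_of_lt hrN] at hj'3
          rw [rhoSub_length] at hj'2
          refine ⟨j', hj'1, by omega, ?_⟩
          have hidx1 : t * N + r + 1 < k * p.length * N := by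
            have h1 := hmulleft t (k * p.length - 1) (by omega)
            omega
          rw [hLlen, Nat.mod_eq_of_lt hidx1]
          have hget1 := hgetD _ hidx1
          have hdiv1 : (t * N + r + 1) / N = t := by
            rw [show t * N + r + 1 = t * N + (r + 1) by omega, rep_div hN hrN]
          have hmod1 : (t * N + r + 1) % N = r + 1 := by
            rw [show t * N + r + 1 = t * N + (r + 1) by omega, rep_mod hrN]
          rw [hdiv1, hmod1] at hget1
          rw [hget1, hgetidx, hj'3, cflip_append_last k j' _ _ (by
            rw [hinnerD _ _ hinmem]; omega)]
        · -- end of a block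
          have hrN' : r + 1 = N := by omega
          have hlast : (RecAux k f (rhoSub k p ((k * p.length - 1 - t) + 1))).getD r []
              = colShift k (k-1) (rhoSub k p ((k * p.length - 1 - t) + 1)).reverse := by
            have hc := (ihi (k * p.length - 1 - t)).2.2.1
            rw [hinnerlen] at hc
            rw [show r = N - 1 by omega]
            exact hc
          refine ⟨p.length, by omega, le_refl _, ?_⟩
          rw [hLlen]
          by_cases htm : t + 1 < k * p.length
          · have h2 : (t + 1) * N = t * N + N := Nat.succ_mul t N
            have hidx1 : t * N + r + 1 < k * p.length * N := by
              have h1 := hmulleft (t + 1) (k * p.length - 1) (by omega)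
              omega
            rw [Nat.mod_eq_of_lt hidx1]
            have hget1 := hgetD _ hidx1
            have hdiv1 : (t * N + r + 1) / N = t + 1 := by
              rw [show t * N + r + 1 = (t + 1) * N + 0 by omega, rep_div hN hN]
            have hmod1 : (t * N + r + 1) % N = 0 := by
              rw [show t * N + r + 1 = (t + 1) * N + 0 by omega, rep_mod hN]
            rw [hdiv1, hmod1] at hget1
            rw [hget1, hgetidx, (ihi _).2.1,
              block_eq hk hne _ (show k * p.length - 1 - (t + 1) < k * p.length by omega),
              hlast, cross hk hne _ (show k * p.length - 1 - t < k * p.length by omega)]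
            congr 1
            rw [show (k * p.length - 1 - t) + k * p.length - 1
              = (k * p.length - 1 - (t + 1)) + k * p.length by omega, Nat.add_mod_right,
              Nat.mod_eq_of_lt (by omega)]
          · have htm' : t = k * p.length - 1 := by omega
            have hidx1 : t * N + r + 1 = k * p.length * N := by
              have h2 : (t + 1) * N = t * N + N := Nat.succ_mul t N
              have h3 : t + 1 = k * p.length := by omega
              rw [h3] at h2
              omega
            rw [hidx1, Nat.mod_self, hfst, hgetidx, hlast,
              show k * p.length - 1 - t = 0 by omega,
              cross hk hne 0 hm,
              show 0 + k * p.length - 1 = k * p.length - 1 by omega,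
              Nat.mod_eq_of_lt (by omega), Wl_last hk hne hcol]

lemma last_eq_of_append_singleton {α : Type*} {A B : List α} {a b : α}
    (h : A ++ [a] = B ++ [b]) : a = b ∧ A = B := by
  have h2 := congrArg List.reverse h
  simp only [List.reverse_append, List.reverse_singleton, List.singleton_append,
    List.cons.injEq] at h2
  refine ⟨h2.1, ?_⟩
  have := congrArg List.reverse h2.2
  simpa using this

lemma sum_map_zero (m : ℕ) (F : ℕ → ℕ) (h : ∀ i < m, F i = 0) :
    ((List.range m).map F).sum = 0 := by
  induction m with
  | zero => simp
  | succ m ihm =>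
    rw [List.range_succ, List.map_append, List.sum_append]
    rw [ihm (fun i hi => h i (by omega))]
    simp [h m (by omega)]

lemma sum_map_delta (m i₀ : ℕ) (F : ℕ → ℕ) (hi₀ : i₀ < m)
    (h : ∀ i < m, F i = if i = i₀ then 1 else 0) :
    ((List.range m).map F).sum = 1 := by
  induction m with
  | zero => omega
  | succ m ihm =>
    rw [List.range_succ, List.map_append, List.sum_append]
    by_cases hc : i₀ = m
    · rw [sum_map_zero m F (fun i hi => by
        rw [h i (by omega)]; exact if_neg (by omega))]
      simp only [List.map_singleton, List.sum_singleton]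
      rw [h m (by omega), if_pos hc.symm]
    · rw [ihm (by omega) (fun i hi => h i (by omega))]
      simp only [List.map_singleton, List.sum_singleton]
      rw [h m (by omega), if_neg (fun hh => hc hh.symm)]

lemma rho_getD_fst {k : ℕ} {p : List (ℕ × ℕ)} (hk : 0 < k) (q : ℕ) (hq : q < k * p.length) :
    ((rho k p).getD q (0,0)).1 = (p.getD (q % p.length) (0,0)).1 := by
  rw [rho_getD hk q hq]

lemma window_perm {k : ℕ} {p : List (ℕ × ℕ)} (hk : 0 < k) (hp : p ≠ []) (i : ℕ)
    (hi : i < k * p.length) :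
    (rhoSub k p (i+1)).map Prod.fst ++ [((rho k p).getD i (0,0)).1]
      = (p.map Prod.fst).rotate (i+1) := by
  have hj : 0 < p.length := List.length_pos_iff.mpr hp
  have hjm : p.length ≤ k * p.length := Nat.le_mul_of_pos_left _ hk
  have hm : 0 < k * p.length := Nat.mul_pos hk hj
  have hkk : k * p.length = (k-1) * p.length + p.length := by
    have : (k-1) * p.length = k * p.length - p.length := by
      rw [Nat.sub_mul, Nat.one_mul]
    omega
  have hdvd : p.length ∣ k * p.length := dvd_mul_left _ _
  apply List.ext_getElem
  · simp only [List.length_append, List.length_map, rhoSub_length, List.length_rotate,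
      List.length_singleton]
    omega
  intro n h1 h2
  have hn : n < p.length := by
    simpa only [List.length_rotate, List.length_map] using h2
  rw [List.getElem_rotate]
  simp only [List.length_map]
  by_cases hn1 : n < p.length - 1
  · rw [List.getElem_append_left (by rw [List.length_map, rhoSub_length]; exact hn1)]
    rw [List.getElem_map]
    have hsn : (rhoSub k p (i+1))[n]'(by rw [rhoSub_length]; exact hn1)
        = (rho k p).getD ((i + 1 + n + k * p.length - p.length) % (k * p.length)) (0,0) := by
      simp [rhoSub]
    rw [hsn, rho_getD_fst hk _ (Nat.mod_lt _ hm)]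
    have hmod : ((i + 1 + n + k * p.length - p.length) % (k * p.length)) % p.length
        = (i + 1 + n) % p.length := by
      rw [Nat.mod_mod_of_dvd _ hdvd,
        show i + 1 + n + k * p.length - p.length = (i + 1 + n) + (k-1) * p.length by omega,
        Nat.add_mul_mod_self_right]
    rw [hmod, List.getElem_map, List.getD_eq_getElem _ _ (Nat.mod_lt _ hj)]
    have hidx : (i + 1 + n) % p.length = (n + (i + 1)) % p.length := by
      congr 1
      omega
    simp only [hidx]
  · have hn2 : n = p.length - 1 := by omega
    rw [List.getElem_append_right (by rw [List.length_map, rhoSub_length]; omega)]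
    have hz : n - ((rhoSub k p (i+1)).map Prod.fst).length = 0 := by
      rw [List.length_map, rhoSub_length]; omega
    simp only [hz, List.getElem_singleton]
    rw [rho_getD_fst hk _ hi, List.getElem_map, List.getD_eq_getElem _ _ (Nat.mod_lt _ hj)]
    have hidx : i % p.length = (n + (i + 1)) % p.length := by
      rw [show n + (i + 1) = i + p.length by omega, Nat.add_mod_right]
    simp only [hidx]

lemma add_mod_cancel' {k x s s' : ℕ} (hs : s < k) (hs' : s' < k)
    (h : (x + s) % k = (x + s') % k) : s = s' := by
  have h2 : s % k = s' % k := Nat.ModEq.add_left_cancel' x h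
  rwa [Nat.mod_eq_of_lt hs, Nat.mod_eq_of_lt hs'] at h2

lemma count_eq_one_of_mem' {α : Type} [BEq α] [LawfulBEq α] {a : α} {l : List α}
    (hn : l.Nodup) (ha : a ∈ l) : l.count a = 1 := by
  induction l with
  | nil => simp at ha
  | cons b l ihl =>
    rw [List.count_cons]
    rcases List.mem_cons.mp ha with rfl | hmem
    · rw [List.count_eq_zero.mpr (List.nodup_cons.mp hn).1]
      simp
    · have hne : a ≠ b := fun h => (List.nodup_cons.mp hn).1 (h ▸ hmem)
      rw [ihl (List.nodup_cons.mp hn).2 hmem]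
      have hne2 : ¬ b = a := fun h => hne h.symm
      simp [hne2]

lemma count_map_append_singleton (r : ℕ × ℕ) (l : List (List (ℕ × ℕ))) (x : List (ℕ × ℕ)) :
    (l.map (fun q => q ++ [r])).count (x ++ [r]) = l.count x := by
  induction l with
  | nil => rfl
  | cons b l ihl =>
    rw [List.map_cons, List.count_cons, List.count_cons, ihl]
    by_cases h : b = x
    · subst h
      simp
    · have h2 : ¬(b ++ [r] = x ++ [r]) := fun hc => h (last_eq_of_append_singleton hc).2
      have h3 : ¬(x ++ [r] = b ++ [r]) := fun hc => h2 hc.symm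
      have h4 : ¬(x = b) := fun hc => h hc.symm
      simp [h2, h3, h, h4]

lemma count_base (k : ℕ) (hk : 0 < k) (x : ℕ × ℕ) (hx : x.2 < k)
    (q : List (ℕ × ℕ)) (hq : (q.map Prod.fst).Perm ([x].map Prod.fst))
    (hqc : ∀ y ∈ q, y.2 < k) :
    ((List.range k).map (fun s => colShift k s [x])).count q = 1 := by
  have hq1 : q.map Prod.fst = [x.1] := by
    simpa using List.perm_singleton.mp hq
  obtain ⟨y, rfl⟩ : ∃ y, q = [y] := by
    apply List.length_eq_one_iff.mp
    have := congrArg List.length hq1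
    simpa using this
  have hy1 : y.1 = x.1 := by simpa using hq1
  have hy2 : y.2 < k := hqc y (by simp)
  apply count_eq_one_of_mem'
  · apply List.Nodup.map_on _ (List.nodup_range (n := k))
    intro s hs s' hs' heq
    rw [List.mem_range] at hs hs'
    have hcc : (x.2 + s) % k = (x.2 + s') % k := by
      have := congrArg (fun l => (List.getD l 0 (0,0)).2) heq
      simpa [colShift] using this
    exact add_mod_cancel' hs hs' hcc
  · rw [List.mem_map]
    refine ⟨(y.2 + k - x.2) % k, by rw [List.mem_range]; exact Nat.mod_lt _ hk, ?_⟩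
    show colShift k ((y.2 + k - x.2) % k) [x] = [y]
    unfold colShift
    simp only [List.map_cons, List.map_nil, List.cons.injEq, and_true]
    refine congrArg₂ Prod.mk hy1.symm ?_
    rw [Nat.add_mod_mod, show x.2 + (y.2 + k - x.2) = y.2 + k by omega,
      Nat.add_mod_right, Nat.mod_eq_of_lt hy2]

lemma recAux_count (k : ℕ) (hk : 0 < k) : ∀ (f : ℕ) (p : List (ℕ × ℕ)),
    p.length = f → p ≠ [] → (∀ x ∈ p, x.2 < k) → (p.map Prod.fst).Nodup →
    ∀ q : List (ℕ × ℕ), (q.map Prod.fst).Perm (p.map Prod.fst) →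
      (∀ x ∈ q, x.2 < k) → (RecAux k f p).count q = 1 := by
  intro f
  induction f with
  | zero =>
    intro p hlen hne _ _
    exact absurd (List.length_eq_zero_iff.mp hlen) hne
  | succ f ih =>
    intro p hlen hne hcol hnodup q hqperm hqcol
    by_cases hle : p.length ≤ 1
    · have hp1 : p.length = 1 := by
        have := List.length_pos_iff.mpr hne; omega
      obtain ⟨x, rfl⟩ := List.length_eq_one_iff.mp hp1
      have hbase : RecAux k (f+1) [x] = (List.range k).map (fun s => colShift k s [x]) := by
        simp [RecAux]
      rw [hbase]
      exact count_base k hk x (hcol x (by simp)) q hqperm hqcol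
    · push_neg at hle
      have hj : 0 < p.length := by omega
      have hm : 0 < k * p.length := Nat.mul_pos hk hj
      have hjm : p.length ≤ k * p.length := Nat.le_mul_of_pos_left _ hk
      have hrec : RecAux k (f+1) p = ((List.range (k * p.length)).reverse).flatMap
          (fun i => (RecAux k f (rhoSub k p (i + 1))).map
            (fun q => q ++ [(rho k p).getD i (0, 0)])) := by
        rw [RecAux, if_neg (by omega)]
      have hqne : q ≠ [] := by
        intro hq0
        rw [hq0] at hqperm
        have h1 := hqperm.length_eq
        rw [List.length_map, List.length_map] at h1
        simp at h1
        omega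
      set y := q.getLast hqne with hydef
      have hqsplit : q.dropLast ++ [y] = q := List.dropLast_append_getLast hqne
      have hymem : y ∈ q := List.getLast_mem hqne
      have hy2 : y.2 < k := hqcol y hymem
      have hy1mem : y.1 ∈ p.map Prod.fst := by
        apply hqperm.subset
        exact List.mem_map_of_mem (f := Prod.fst) hymem
      obtain ⟨b, hb, hbval⟩ := List.mem_iff_getElem.mp hy1mem
      rw [List.length_map] at hb
      have hbval' : (p.getD b (0,0)).1 = y.1 := by
        rw [List.getD_eq_getElem _ _ hb]
        rw [List.getElem_map] at hbval
        exact hbval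
      have hcb : (p.getD b (0,0)).2 < k := by
        apply hcol
        rw [List.getD_eq_getElem _ _ hb]
        exact List.getElem_mem hb
      obtain ⟨s, hs, hshift⟩ : ∃ s, s < k ∧ ((p.getD b (0,0)).2 + s) % k = y.2 := by
        refine ⟨(y.2 + k - (p.getD b (0,0)).2) % k, Nat.mod_lt _ hk, ?_⟩
        rw [Nat.add_mod_mod,
          show (p.getD b (0,0)).2 + (y.2 + k - (p.getD b (0,0)).2) = y.2 + k by omega,
          Nat.add_mod_right, Nat.mod_eq_of_lt hy2]
      have hi₀ : (k - 1 - s) * p.length + b < k * p.length := by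
        have h1 : (k - 1 - s) * p.length ≤ (k-1) * p.length :=
          Nat.mul_le_mul_right _ (by omega)
        have hkk : (k-1) * p.length + p.length = k * p.length := by
          have : (k-1) * p.length = k * p.length - p.length := by
            rw [Nat.sub_mul, Nat.one_mul]
          omega
        omega
      have hrho0 : (rho k p).getD ((k - 1 - s) * p.length + b) (0,0) = y := by
        rw [rho_getD hk _ hi₀, rep_div hj hb, rep_mod hb,
          show k - 1 - (k - 1 - s) = s by omega]
        exact Prod.ext hbval' hshift
      have huniq : ∀ i, i < k * p.length → (rho k p).getD i (0,0) = y →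
          i = (k - 1 - s) * p.length + b := by
        intro i hi hiy
        obtain ⟨a', b', hb', rfl⟩ : ∃ a' b', b' < p.length ∧ i = a' * p.length + b' :=
          ⟨i / p.length, i % p.length, Nat.mod_lt _ hj,
            (Nat.div_add_mod' i p.length).symm⟩
        have ha' : a' < k := by
          by_contra hcon
          push_neg at hcon
          have : k * p.length ≤ a' * p.length := Nat.mul_le_mul_right _ hcon
          omega
        rw [rho_getD hk _ hi, rep_div hj hb', rep_mod hb'] at hiy
        have h1 := congrArg Prod.fst hiy
        simp only at h1
        have hbb : b' = b := by
          have hinj := hnodup.getElem_inj_iff (i := b')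
            (hi := by rw [List.length_map]; exact hb') (j := b)
            (hj := by rw [List.length_map]; exact hb)
          apply hinj.mp
          rw [List.getElem_map, List.getElem_map, ← List.getD_eq_getElem p (0,0) hb',
            ← List.getD_eq_getElem p (0,0) hb, h1, hbval']
        subst hbb
        have h2 := congrArg Prod.snd hiy
        simp only at h2
        rw [← hshift] at h2
        have := add_mod_cancel' (by omega : k - 1 - a' < k) hs h2
        have h4 : a' = k - 1 - s := by omega
        rw [h4]
      rw [hrec, List.count_flatMap, List.map_reverse, List.sum_reverse]
      apply sum_map_delta (k * p.length) ((k - 1 - s) * p.length + b) _ hi₀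
      intro i hi
      simp only [Function.comp_apply]
      by_cases hiy : (rho k p).getD i (0,0) = y
      · rw [if_pos (huniq i hi hiy), huniq i hi hiy]
        conv_lhs => rw [← hqsplit, ← hrho0]
        rw [count_map_append_singleton]
        have hwin := window_perm hk hne _ hi₀
        rw [hrho0] at hwin
        have hrotperm : ((p.map Prod.fst).rotate ((k - 1 - s) * p.length + b + 1)).Perm
            (p.map Prod.fst) := List.rotate_perm _ _
        have hsubnodup : ((rhoSub k p ((k - 1 - s) * p.length + b + 1)).map Prod.fst).Nodup := by
          have h3 : ((rhoSub k p ((k - 1 - s) * p.length + b + 1)).map Prod.fst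
              ++ [y.1]).Nodup := by
            rw [hwin]
            exact List.nodup_rotate.mpr hnodup
          exact (List.sublist_append_left _ _).nodup h3
        have hdropperm : (q.dropLast.map Prod.fst).Perm
            ((rhoSub k p ((k - 1 - s) * p.length + b + 1)).map Prod.fst) := by
          apply (List.perm_append_right_iff [y.1]).mp
          have hqmap : q.dropLast.map Prod.fst ++ [y.1] = q.map Prod.fst := by
            conv_rhs => rw [← hqsplit]
            rw [List.map_append, List.map_singleton]
          rw [hqmap, hwin]
          exact hqperm.trans hrotperm.symm
        have hdropcol : ∀ x ∈ q.dropLast, x.2 < k := fun x hx =>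
          hqcol x (List.Sublist.mem hx (List.dropLast_sublist q))
        have hcount := ih (rhoSub k p ((k - 1 - s) * p.length + b + 1))
          (by rw [rhoSub_length]; omega)
          (by apply List.ne_nil_of_length_pos; rw [rhoSub_length]; omega)
          (rhoSub_col hk _) hsubnodup q.dropLast hdropperm hdropcol
        exact hcount
      · rw [if_neg (fun he => hiy (by rw [he]; exact hrho0))]
        apply List.count_eq_zero.mpr
        intro hmem
        rw [List.mem_map] at hmem
        obtain ⟨q', _, hq'⟩ := hmem
        exact hiy (last_eq_of_append_singleton (hq'.trans hqsplit.symm)).1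

/-- For `n ≥ 2`, `k ≥ 1`, the `k`-sided pancake network (the directed
graph on `CPERMS(n,k)` with an edge from `π` to `flip_j(π)` for each `1 ≤ j ≤ n`) has a
directed Hamilton cycle: there is a cyclic ordering of all `kⁿ·n!` coloured permutations
in which each one is followed by a flip of it. -/
theorem ksided_pancake_hamilton (n k : ℕ) (hn : 2 ≤ n) (hk : 1 ≤ k) :
    ∃ L : List (List (ℕ × ℕ)),
      L.length = k ^ n * n.factorial ∧
      (∀ q, IsCPerm n k q → L.count q = 1) ∧
      ∀ i < L.length, ∃ j, 1 ≤ j ∧ j ≤ n ∧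
        L.getD ((i + 1) % L.length) [] = cflip k j (L.getD i []) := by
  have hk0 : 0 < k := hk
  have hlen : (idPerm n).length = n := by simp [idPerm]
  have hne : idPerm n ≠ [] := by
    apply List.ne_nil_of_length_pos
    rw [hlen]; omega
  have hcol : ∀ x ∈ idPerm n, x.2 < k := by
    intro x hx
    simp only [idPerm, List.mem_map] at hx
    obtain ⟨i, _, rfl⟩ := hx
    exact hk0
  have hfst : (idPerm n).map Prod.fst = (List.range n).map (· + 1) := by
    simp [idPerm]
  have hnodup : ((idPerm n).map Prod.fst).Nodup := by
    rw [hfst]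
    exact (List.nodup_range (n := n)).map (fun a b h => by omega)
  obtain ⟨hA, hB, hC, hD, hE⟩ :=
    recAux_struct k hk0 (idPerm n).length (idPerm n) rfl hne hcol
  refine ⟨RecList k (idPerm n), ?_, ?_, ?_⟩
  · show (RecAux k (idPerm n).length (idPerm n)).length = _
    rw [hA, hlen]
  · intro q hq
    obtain ⟨hq1, hq2⟩ := hq
    show (RecAux k (idPerm n).length (idPerm n)).count q = 1
    refine recAux_count k hk0 (idPerm n).length (idPerm n) rfl hne hcol hnodup q ?_ hq2
    rw [hfst]
    exact hq1
  · intro i hi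
    obtain ⟨j, h1, h2, h3⟩ := hE i hi
    exact ⟨j, h1, by rw [← hlen]; exact h2, h3⟩
end

section
/- For all n ≥ 3, the pancake network P_n has a Hamilton cycle: there exists a cyclic ordering of all n! permutations of {1,…,n} in which every two consecutive permutations differ by a prefix reversal of length ℓ for some 2 ≤ ℓ ≤ n. -/
/-- The prefix reversal of length `ℓ`: reverse the order of the first `ℓ` symbols. -/
def prefixRev (ℓ : ℕ) (p : List ℕ) : List ℕ := (p.take ℓ).reverse ++ p.drop ℓ

lemma length_prefixRev (ℓ : ℕ) (p : List ℕ) : (prefixRev ℓ p).length = p.length := by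
  simp [prefixRev]; omega

lemma perm_prefixRev (ℓ : ℕ) (p : List ℕ) : (prefixRev ℓ p).Perm p :=
  (((p.take ℓ).reverse_perm).append_right _).trans (by rw [p.take_append_drop ℓ])

lemma prefixRev_prefixRev (ℓ : ℕ) (p : List ℕ) (h : ℓ ≤ p.length) :
    prefixRev ℓ (prefixRev ℓ p) = p := by
  have h1 : ((p.take ℓ).reverse).length = ℓ := by simp; omega
  unfold prefixRev
  rw [List.take_append, List.drop_append, h1,
    List.take_of_length_le (le_of_eq h1), List.drop_eq_nil_of_le (le_of_eq h1)]
  simp [p.take_append_drop]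

def stepN (n : ℕ) (p : List ℕ) : List ℕ := prefixRev (n+1) (prefixRev n p)

lemma stepN_eq (n : ℕ) (p : List ℕ) (h : n < p.length) :
    stepN n p = p[n] :: (p.take n ++ p.drop (n+1)) := by
  have h1 : (p.take n).length = n := by simp; omega
  have h2 : p.drop n = p[n] :: p.drop (n+1) := List.drop_eq_getElem_cons h
  unfold stepN prefixRev
  rw [h2, List.take_append, List.drop_append]
  simp only [List.length_reverse, h1]
  have e1 : n + 1 - n = 1 := by omega
  have e2 : (List.take n p).reverse.length = n := by simp [h1]
  rw [e1, List.take_of_length_le (by omega : (List.take n p).reverse.length ≤ n + 1),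
    List.drop_eq_nil_of_le (by omega : (List.take n p).reverse.length ≤ n + 1)]
  simp
  rw [show List.take 1 (List.drop n p) = [p[n]] from by rw [h2, List.take_succ_cons, List.take_zero]]
  simp

lemma length_stepN (n : ℕ) (p : List ℕ) : (stepN n p).length = p.length := by
  simp [stepN, length_prefixRev]

lemma perm_stepN (n : ℕ) (p : List ℕ) : (stepN n p).Perm p :=
  (perm_prefixRev _ _).trans (perm_prefixRev _ _)

lemma length_iter_stepN (n i : ℕ) (p : List ℕ) : ((stepN n)^[i] p).length = p.length := by
  induction i generalizing p with
  | zero => rfl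
  | succ i ih => rw [Function.iterate_succ_apply, ih, length_stepN]

lemma perm_iter_stepN (n i : ℕ) (p : List ℕ) : ((stepN n)^[i] p).Perm p := by
  induction i generalizing p with
  | zero => exact List.Perm.refl p
  | succ i ih => exact (ih _).trans (perm_stepN n p)

lemma iter_stepN_eq (n : ℕ) (p : List ℕ) (h : n < p.length) :
    ∀ i, i ≤ n → (stepN n)^[i] p =
      (p.take (n+1)).drop (n+1-i) ++ p.take (n+1-i) ++ p.drop (n+1) := by
  intro i
  induction i with
  | zero =>
    intro _
    simp only [Function.iterate_zero, id_eq, Nat.sub_zero]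
    rw [List.drop_of_length_le (by simp), List.nil_append, p.take_append_drop]
  | succ i ih =>
    intro hi
    have hlt : (p.take (n+1)).length = n + 1 := by simp; omega
    rw [Function.iterate_succ_apply', ih (by omega)]
    have hAlen : ((p.take (n+1)).drop (n+1-i)).length = i := by simp; omega
    have hBlen : (p.take (n+1-i)).length = n+1-i := by simp; omega
    rw [stepN_eq _ _ (by simp only [List.length_append, List.length_drop, hlt, hBlen]; omega)]
    have htake : ((p.take (n+1)).drop (n+1-i) ++ p.take (n+1-i) ++ p.drop (n+1)).take n
        = (p.take (n+1)).drop (n+1-i) ++ p.take (n-i) := by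
      rw [List.append_assoc, List.take_append,
        List.take_of_length_le (by rw [hAlen]; omega), hAlen]
      congr 1
      rw [List.take_append, hBlen, List.take_take,
        show (n-i) ⊓ (n+1-i) = n - i from by omega,
        show n - i - (n+1-i) = 0 from by omega, List.take_zero, List.append_nil]
    have hdrop : ((p.take (n+1)).drop (n+1-i) ++ p.take (n+1-i) ++ p.drop (n+1)).drop (n+1)
        = p.drop (n+1) := by
      rw [List.drop_append,
        List.drop_eq_nil_of_le (by simp only [List.length_append, hAlen, hBlen]; omega),
        List.nil_append,
        show n + 1 - ((p.take (n+1)).drop (n+1-i) ++ p.take (n+1-i)).length = 0 from by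
          simp only [List.length_append, hAlen, hBlen]; omega,
        List.drop_zero]
    have hAexp : (p.take (n+1)).drop (n-i) = p[n-i] :: (p.take (n+1)).drop (n+1-i) := by
      rw [List.drop_eq_getElem_cons (by omega), List.getElem_take]
      congr 2
      omega
    rw [htake, hdrop, show n+1-(i+1) = n-i from by omega, hAexp]
    simp only [List.cons_append, List.append_assoc]
    congr 1
    rw [List.getElem_append_right (by rw [hAlen]; omega),
      List.getElem_append_left (by simp only [hAlen, hBlen]; omega),
      List.getElem_take]
    congr 1
    rw [hAlen]

lemma drop_iter_stepN (n i : ℕ) (p : List ℕ) (h : n < p.length) (hi : i ≤ n) :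
    ((stepN n)^[i] p).drop (n+1) = p.drop (n+1) := by
  have hlt : (p.take (n+1)).length = n + 1 := by simp; omega
  have hAlen : ((p.take (n+1)).drop (n+1-i)).length = i := by simp; omega
  have hBlen : (p.take (n+1-i)).length = n+1-i := by simp; omega
  rw [iter_stepN_eq n p h i hi, List.drop_append,
    List.drop_eq_nil_of_le (by simp only [List.length_append, hAlen, hBlen]; omega),
    List.nil_append,
    show n + 1 - ((p.take (n+1)).drop (n+1-i) ++ p.take (n+1-i)).length = 0 from by
      simp only [List.length_append, hAlen, hBlen]; omega,
    List.drop_zero]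

lemma take_iter_stepN_perm (n i : ℕ) (p : List ℕ) (h : n < p.length) (hi : i ≤ n) :
    (((stepN n)^[i] p).take (n+1)).Perm (p.take (n+1)) := by
  have hlt : (p.take (n+1)).length = n + 1 := by simp; omega
  have hAlen : ((p.take (n+1)).drop (n+1-i)).length = i := by simp; omega
  have hBlen : (p.take (n+1-i)).length = n+1-i := by simp; omega
  rw [iter_stepN_eq n p h i hi, List.append_assoc, List.take_append,
    List.take_of_length_le (show ((p.take (n+1)).drop (n+1-i)).length ≤ n+1 from by
      rw [hAlen]; omega), hAlen,
    List.take_append, hBlen,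
    List.take_of_length_le (show (p.take (n+1-i)).length ≤ n+1-i from le_of_eq hBlen),
    show n + 1 - i - (n+1-i) = 0 from by omega, List.take_zero, List.append_nil]
  refine (List.perm_append_comm).trans ?_
  have hBA : p.take (n+1-i) ++ (p.take (n+1)).drop (n+1-i) = p.take (n+1) := by
    conv_lhs => rw [show p.take (n+1-i) = (p.take (n+1)).take (n+1-i) from by
      rw [List.take_take, Nat.min_eq_left (by omega)]]
    rw [List.take_append_drop]
  rw [hBA]

lemma getD_iter_stepN (n i j : ℕ) (p : List ℕ) (h : n < p.length) (hij : i ≤ j) (hj : j ≤ n) :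
    ((stepN n)^[i] p).getD j 0 = p.getD (j-i) 0 := by
  have hlt : (p.take (n+1)).length = n + 1 := by simp; omega
  have hAlen : ((p.take (n+1)).drop (n+1-i)).length = i := by simp; omega
  have hBlen : (p.take (n+1-i)).length = n+1-i := by simp; omega
  have hi : i ≤ n := le_trans hij hj
  rw [iter_stepN_eq n p h i hi, List.append_assoc]
  rw [List.getD_eq_getElem _ _ (by simp only [List.length_append, hAlen, hBlen, List.length_drop]; omega),
    List.getD_eq_getElem _ _ (by omega)]
  rw [List.getElem_append_right (by rw [hAlen]; omega),
    List.getElem_append_left (by simp only [hAlen, hBlen]; omega),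
    List.getElem_take]
  congr 1
  rw [hAlen]

lemma prefixRev_iter_stepN (n : ℕ) (p : List ℕ) (h : n < p.length) :
    prefixRev n ((stepN n)^[n] p) = prefixRev (n+1) p := by
  have hlt : (p.take (n+1)).length = n + 1 := by simp; omega
  have h1 : n + 1 - n = 1 := by omega
  have hAlen : ((p.take (n+1)).drop 1).length = n := by simp; omega
  rw [iter_stepN_eq n p h n le_rfl, h1]
  unfold prefixRev
  rw [List.append_assoc, List.take_append,
    List.take_of_length_le (show ((p.take (n+1)).drop 1).length ≤ n from le_of_eq hAlen),
    hAlen, Nat.sub_self, List.take_zero, List.append_nil,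
    List.drop_append,
    List.drop_eq_nil_of_le (show ((p.take (n+1)).drop 1).length ≤ n from le_of_eq hAlen),
    hAlen, Nat.sub_self, List.drop_zero, List.nil_append]
  have hsplit : (p.take (n+1)).reverse = ((p.take (n+1)).drop 1).reverse ++ p.take 1 := by
    conv_lhs => rw [show p.take (n+1) = (p.take (n+1)).take 1 ++ (p.take (n+1)).drop 1 from
      (List.take_append_drop _ _).symm]
    rw [List.reverse_append]
    congr 1
    rw [List.take_take, Nat.min_eq_left (by omega)]
    rcases hp : p with _ | ⟨a, q⟩
    · simp [hp] at h
    · simp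
  rw [hsplit, List.append_assoc]

def Tb (f : List ℕ → List (List ℕ)) (s : List ℕ → List ℕ) : ℕ → List ℕ → List (List ℕ)
  | 0, _ => []
  | k+1, p => f p ++ Tb f s k (s p)

def T : ℕ → List ℕ → List (List ℕ)
  | 0, p => [p]
  | n+1, p => Tb (T n) (stepN n) (n+1) p

lemma Tb_succ_right (f : List ℕ → List (List ℕ)) (s : List ℕ → List ℕ) (k : ℕ) (p : List ℕ) :
    Tb f s (k+1) p = Tb f s k p ++ f (s^[k] p) := by
  induction k generalizing p with
  | zero => simp [Tb]
  | succ k ih =>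
    show f p ++ Tb f s (k+1) (s p) = (f p ++ Tb f s k (s p)) ++ f (s^[k+1] p)
    rw [ih (s p), List.append_assoc, Function.iterate_succ_apply]

lemma Tb_length (f : List ℕ → List (List ℕ)) (s : List ℕ → List ℕ) (c : ℕ)
    (hf : ∀ q, (f q).length = c) (k : ℕ) (p : List ℕ) :
    (Tb f s k p).length = k * c := by
  induction k generalizing p with
  | zero => simp [Tb]
  | succ k ih =>
    show (f p ++ Tb f s k (s p)).length = (k+1) * c
    rw [List.length_append, hf, ih]; ring

lemma T_length (n : ℕ) (p : List ℕ) : (T n p).length = n.factorial := by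
  induction n generalizing p with
  | zero => rfl
  | succ n ih =>
    show (Tb (T n) (stepN n) (n+1) p).length = (n+1).factorial
    rw [Tb_length _ _ (n.factorial) ih, Nat.factorial_succ]

lemma T_ne_nil (n : ℕ) (p : List ℕ) : T n p ≠ [] := by
  intro hc
  have := T_length n p
  rw [hc] at this
  exact absurd this.symm (Nat.factorial_ne_zero n)

lemma T_head (n : ℕ) (p : List ℕ) : (T n p).head? = some p := by
  induction n generalizing p with
  | zero => rfl
  | succ n ih =>
    show (T n p ++ Tb (T n) (stepN n) n (stepN n p)).head? = some p
    rw [List.head?_append_of_ne_nil _ (T_ne_nil n p), ih]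

lemma T_getLast (n : ℕ) (p : List ℕ) (h : n ≤ p.length) :
    (T n p).getLast? = some (prefixRev n p) := by
  induction n generalizing p with
  | zero => rfl
  | succ n ih =>
    show (Tb (T n) (stepN n) (n+1) p).getLast? = some (prefixRev (n+1) p)
    rw [Tb_succ_right, List.getLast?_append_of_ne_nil _ (T_ne_nil n _),
      ih _ (by rw [length_iter_stepN]; omega), prefixRev_iter_stepN n p (by omega)]

def PRel (m : ℕ) (a b : List ℕ) : Prop := ∃ ℓ, 2 ≤ ℓ ∧ ℓ ≤ m ∧ b = prefixRev ℓ a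

lemma Tb_head (n k : ℕ) (q : List ℕ) : (Tb (T n) (stepN n) (k+1) q).head? = some q := by
  show (T n q ++ _).head? = some q
  rw [List.head?_append_of_ne_nil _ (T_ne_nil n q), T_head]

lemma T_chain (n m : ℕ) (p : List ℕ) (hm : n ≤ m) (h : n ≤ p.length) :
    List.Chain' (PRel m) (T n p) := by
  induction n generalizing p with
  | zero => exact List.isChain_singleton p
  | succ n ih =>
    show List.Chain' (PRel m) (Tb (T n) (stepN n) (n+1) p)
    have key : ∀ k, (1 ≤ n ∨ k ≤ 1) → ∀ q : List ℕ, q.length = p.length →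
        List.Chain' (PRel m) (Tb (T n) (stepN n) k q) := by
      intro k
      induction k with
      | zero => intro _ q _; exact List.isChain_nil
      | succ k ihk =>
        intro hcond q hq
        show List.Chain' (PRel m) (T n q ++ Tb (T n) (stepN n) k (stepN n q))
        rw [List.Chain', List.isChain_append]
        refine ⟨ih q (by omega) (by omega), ihk ?_ (stepN n q) (by rw [length_stepN, hq]), ?_⟩
        · rcases hcond with h1 | h1
          · exact Or.inl h1
          · right; omega
        · intro x hx y hy
          rcases k with _ | k
          · simp [Tb] at hy
          · rw [T_getLast n q (by omega)] at hx
            rw [Tb_head] at hy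
            simp only [Option.mem_def, Option.some_inj] at hx hy
            subst hx hy
            have hn1 : 1 ≤ n := by
              rcases hcond with h1 | h1
              · exact h1
              · omega
            exact ⟨n+1, by omega, by omega, rfl⟩
    exact key (n+1) (by omega) p rfl

/-- The block condition: `q` agrees with `r` beyond position `n` and is a permutation
of `r` on the first `n` positions. -/
def CondN (n : ℕ) (r q : List ℕ) : Prop := (q.take n).Perm (r.take n) ∧ q.drop n = r.drop n

lemma condN_length_eq {n : ℕ} {r q : List ℕ} (hc : CondN n r q) : q.length = r.length := by
  have h1 := hc.1.length_eq
  have h2 := congrArg List.length hc.2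
  simp only [List.length_take, List.length_drop] at h1 h2
  omega

lemma condN_getD {n : ℕ} {r q : List ℕ} (hn : n < r.length) (hc : CondN n r q) :
    q.getD n 0 = r.getD n 0 := by
  have hq : n < q.length := by rw [condN_length_eq hc]; exact hn
  have e1 : q.drop n = q[n] :: q.drop (n+1) := List.drop_eq_getElem_cons hq
  have e2 : r.drop n = r[n] :: r.drop (n+1) := List.drop_eq_getElem_cons hn
  rw [hc.2, e2] at e1
  have e3 := (List.cons.injEq _ _ _ _).mp e1.symm
  rw [List.getD_eq_getElem _ _ hq, List.getD_eq_getElem _ _ hn]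
  exact e3.1

lemma condN_take_succ {n : ℕ} {r q : List ℕ} (hn : n < r.length) (hc : CondN n r q) :
    (q.take (n+1)).Perm (r.take (n+1)) := by
  have hq : n < q.length := by rw [condN_length_eq hc]; exact hn
  rw [List.take_succ, List.take_succ, List.getElem?_eq_getElem hq, List.getElem?_eq_getElem hn]
  have hx : q[n] = r[n] := by
    have := condN_getD hn hc
    rwa [List.getD_eq_getElem _ _ hq, List.getD_eq_getElem _ _ hn] at this
  rw [hx]
  exact hc.1.append_right _

lemma condN_drop_succ {n : ℕ} {r q : List ℕ} (hc : CondN n r q) :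
    q.drop (n+1) = r.drop (n+1) := by
  rw [← List.drop_drop, ← List.drop_drop, hc.2]

/-- The block condition at level `n` for block `i` implies the level `n+1` condition. -/
lemma condN_up {n i : ℕ} {p q : List ℕ} (h : n < p.length) (hi : i ≤ n)
    (hc : CondN n ((stepN n)^[i] p) q) : CondN (n+1) p q := by
  have hr : n < ((stepN n)^[i] p).length := by rw [length_iter_stepN]; omega
  constructor
  · exact (condN_take_succ hr hc).trans (take_iter_stepN_perm n i p h hi)
  · rw [condN_drop_succ hc, drop_iter_stepN n i p h hi]

lemma block_unique {n : ℕ} {p q : List ℕ} (h : n < p.length) (hnd : p.Nodup)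
    {i j : ℕ} (hi : i ≤ n) (hj : j ≤ n)
    (hci : CondN n ((stepN n)^[i] p) q) (hcj : CondN n ((stepN n)^[j] p) q) : i = j := by
  have hri : n < ((stepN n)^[i] p).length := by rw [length_iter_stepN]; omega
  have hrj : n < ((stepN n)^[j] p).length := by rw [length_iter_stepN]; omega
  have e1 := (condN_getD hri hci).symm.trans (condN_getD hrj hcj)
  rw [getD_iter_stepN n i n p h hi le_rfl, getD_iter_stepN n j n p h hj le_rfl] at e1
  rw [List.getD_eq_getElem _ _ (show n - i < p.length by omega),
    List.getD_eq_getElem _ _ (show n - j < p.length by omega)] at e1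
  have := (List.Nodup.getElem_inj_iff hnd).mp e1
  omega

/-- Conversely, the level `n+1` condition puts `q` in some block. -/
lemma condN_down {n : ℕ} {p q : List ℕ} (h : n < p.length)
    (hc : CondN (n+1) p q) : ∃ i, i ≤ n ∧ CondN n ((stepN n)^[i] p) q := by
  have hq : n < q.length := by rw [condN_length_eq hc]; exact Nat.lt_of_lt_of_le h (by omega)
  have hmem : q[n] ∈ q.take (n+1) := by
    have h0 : n < (q.take (n+1)).length := by simp; omega
    have h1 := List.getElem_mem h0
    rwa [List.getElem_take] at h1
  have hmem2 : q[n] ∈ p.take (n+1) := hc.1.mem_iff.mp hmem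
  obtain ⟨j, hjlt, hje⟩ := List.getElem_of_mem hmem2
  have hjlt' : j < n + 1 := by simp at hjlt; omega
  rw [List.getElem_take] at hje
  refine ⟨n - j, by omega, ?_, ?_⟩
  · -- take n q ~ take n r
    set r := (stepN n)^[n-j] p with hrdef
    have hrlen : r.length = p.length := length_iter_stepN ..
    have hrn : r.getD n 0 = p.getD j 0 := by
      rw [hrdef, getD_iter_stepN n (n-j) n p h (by omega) le_rfl]
      congr 1
      omega
    have hperm : (q.take (n+1)).Perm (r.take (n+1)) :=
      hc.1.trans (take_iter_stepN_perm n (n-j) p h (by omega)).symm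
    have hqn : q[n] = r[n]'(by omega) := by
      have h1 : r.getD n 0 = p.getD j 0 := hrn
      rw [List.getD_eq_getElem _ _ (show n < r.length by omega),
        List.getD_eq_getElem _ _ (show j < p.length by omega)] at h1
      rw [h1, hje]
    rw [List.take_succ, List.take_succ, List.getElem?_eq_getElem hq,
      List.getElem?_eq_getElem (by omega : n < r.length), hqn] at hperm
    simp only [Option.toList_some] at hperm
    exact ((List.perm_append_singleton ..).symm.trans
      (hperm.trans (List.perm_append_singleton ..))).cons_inv
  · -- drop n q = drop n r
    set r := (stepN n)^[n-j] p with hrdef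
    have hrlen : r.length = p.length := length_iter_stepN ..
    rw [List.drop_eq_getElem_cons hq, List.drop_eq_getElem_cons (by omega : n < r.length)]
    congr 1
    · have h1 : r.getD n 0 = p.getD j 0 := by
        rw [hrdef, getD_iter_stepN n (n-j) n p h (by omega) le_rfl]
        congr 1
        omega
      rw [List.getD_eq_getElem _ _ (show n < r.length by omega),
        List.getD_eq_getElem _ _ (show j < p.length by omega)] at h1
      rw [h1, hje]
    · rw [hc.2, hrdef, drop_iter_stepN n (n-j) p h (by omega)]

open Classical in
lemma T_count (n : ℕ) (p q : List ℕ) (h : n ≤ p.length) (hnd : p.Nodup) :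
    (T n p).count q = if CondN n p q then 1 else 0 := by
  induction n generalizing p with
  | zero =>
    show [p].count q = _
    by_cases hqp : q = p
    · subst hqp
      rw [if_pos ⟨List.Perm.refl _, rfl⟩]
      simp
    · rw [if_neg]
      · simp [hqp, Ne.symm hqp]
      · intro hc
        exact hqp (by simpa [CondN] using hc.2)
  | succ n ih =>
    show (Tb (T n) (stepN n) (n+1) p).count q = _
    have key : ∀ k j0 : ℕ, k + j0 = n + 1 →
        (Tb (T n) (stepN n) k ((stepN n)^[j0] p)).count q
          = if (∃ i, j0 ≤ i ∧ i ≤ n ∧ CondN n ((stepN n)^[i] p) q) then 1 else 0 := by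
      intro k
      induction k with
      | zero =>
        intro j0 hj0
        rw [if_neg]
        · rfl
        · rintro ⟨i, h1, h2, _⟩; omega
      | succ k ihk =>
        intro j0 hj0
        show ((T n ((stepN n)^[j0] p)) ++
          Tb (T n) (stepN n) k (stepN n ((stepN n)^[j0] p))).count q = _
        rw [List.count_append, ← Function.iterate_succ_apply' (stepN n) j0 p,
          ihk (j0+1) (by omega),
          ih ((stepN n)^[j0] p) (by rw [length_iter_stepN]; omega)
            (((perm_iter_stepN n j0 p).nodup_iff).mpr hnd)]
        by_cases hc0 : CondN n ((stepN n)^[j0] p) q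
        · rw [if_pos hc0, if_neg, if_pos ⟨j0, le_rfl, by omega, hc0⟩]
          rintro ⟨i, hi1, hi2, hci⟩
          have := block_unique (show n < p.length by omega) hnd
            (show i ≤ n from hi2) (show j0 ≤ n by omega) hci hc0
          omega
        · rw [if_neg hc0]
          by_cases hex : ∃ i, j0+1 ≤ i ∧ i ≤ n ∧ CondN n ((stepN n)^[i] p) q
          · rw [if_pos hex, if_pos]
            obtain ⟨i, a, b, c⟩ := hex
            exact ⟨i, by omega, b, c⟩
          · rw [if_neg hex, if_neg]
            rintro ⟨i, hi1, hi2, hci⟩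
            rcases Nat.eq_or_lt_of_le hi1 with rfl | hlt
            · exact hc0 hci
            · exact hex ⟨i, hlt, hi2, hci⟩
    have hk := key (n+1) 0 (by omega)
    simp only [Function.iterate_zero, id_eq] at hk
    rw [hk]
    by_cases hC : CondN (n+1) p q
    · rw [if_pos hC, if_pos]
      obtain ⟨i, hi, hci⟩ := condN_down (show n < p.length by omega) hC
      exact ⟨i, Nat.zero_le _, hi, hci⟩
    · rw [if_neg hC, if_neg]
      rintro ⟨i, _, hi2, hci⟩
      exact hC (condN_up (by omega) hi2 hci)

/-- For `n ≥ 3`, the pancake network `P_n` has a Hamilton cycle: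
there is a cyclic ordering of all `n!` permutations of `{1,…,n}` in which every two
consecutive permutations differ by a prefix reversal of length `ℓ` with `2 ≤ ℓ ≤ n`. -/
theorem pancake_hamilton (n : ℕ) (hn : 3 ≤ n) :
    ∃ L : List (List ℕ),
      L.length = n.factorial ∧
      (∀ p : List ℕ, p.Perm ((List.range n).map (· + 1)) → L.count p = 1) ∧
      ∀ i < L.length, ∃ ℓ, 2 ≤ ℓ ∧ ℓ ≤ n ∧
        L.getD ((i + 1) % L.length) [] = prefixRev ℓ (L.getD i []) := by
  classical
  set p₀ : List ℕ := (List.range n).map (· + 1) with hp₀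
  have hlen : p₀.length = n := by simp [hp₀]
  have hnd : p₀.Nodup := by
    refine List.Nodup.map ?_ List.nodup_range
    intro a b hab
    simp only at hab
    omega
  refine ⟨T n p₀, T_length n p₀, ?_, ?_⟩
  · intro q hq
    have hql : q.length = n := by rw [hq.length_eq, hlen]
    have hcond : CondN n p₀ q := by
      constructor
      · rw [List.take_of_length_le (le_of_eq hql), List.take_of_length_le (le_of_eq hlen)]
        exact hq
      · rw [List.drop_eq_nil_of_le (le_of_eq hql), List.drop_eq_nil_of_le (le_of_eq hlen)]
    rw [T_count n p₀ q (le_of_eq hlen.symm) hnd, if_pos hcond]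
  · intro i hi
    have hch : List.Chain' (PRel n) (T n p₀) := T_chain n n p₀ le_rfl (le_of_eq hlen.symm)
    rcases Nat.lt_or_ge (i+1) (T n p₀).length with hlt | hge
    · have hR := (List.isChain_iff_getElem.mp hch) i (by omega)
      obtain ⟨ℓ, h2, h3, heq⟩ := hR
      refine ⟨ℓ, h2, h3, ?_⟩
      rw [Nat.mod_eq_of_lt hlt, List.getD_eq_getElem _ _ hlt, List.getD_eq_getElem _ _ hi]
      simpa [List.get_eq_getElem] using heq
    · have hieq : i + 1 = (T n p₀).length := by omega
      have hmod : (i + 1) % (T n p₀).length = 0 := by rw [hieq, Nat.mod_self]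
      have hne := T_ne_nil n p₀
      -- first element is p₀
      have hhead : (T n p₀).getD 0 [] = p₀ := by
        have h1 := T_head n p₀
        obtain ⟨t, ht⟩ := List.head?_eq_some_iff.mp h1
        rw [ht]
        rfl
      -- element i is the last element, prefixRev n p₀
      have hlast : (T n p₀).getD i [] = prefixRev n p₀ := by
        have h1 := T_getLast n p₀ (le_of_eq hlen.symm)
        rw [List.getD_eq_getElem _ _ hi]
        have h2 : (T n p₀).getLast hne = prefixRev n p₀ := by
          have := List.getLast?_eq_getLast hne   -- getLast? = some (getLast)
          rw [this] at h1
          exact Option.some_inj.mp h1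
        rw [← h2, List.getLast_eq_getElem]
        congr 1
        omega
      refine ⟨n, by omega, le_rfl, ?_⟩
      rw [hmod, hhead, hlast, prefixRev_prefixRev n p₀ (le_of_eq hlen.symm)]
end

section
/- For all n ≥ 2, the burnt pancake network B_n has a Hamilton cycle: there exists a cyclic ordering of all 2^n·n! signed permutations of {1,…,n} in which every two consecutive signed permutations differ by a sign-complementing prefix reversal of some length 1 ≤ ℓ ≤ n. -/
/-- `p` is a signed permutation of `{1,…,n}`: a list of nonzero integers whose
absolute values form a permutation of `{1,…,n}`. -/
def IsSignedPerm (n : ℕ) (p : List ℤ) : Prop :=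
  (p.map Int.natAbs).Perm ((List.range n).map (· + 1)) ∧ ∀ x ∈ p, x ≠ 0

/-- The sign-complementing prefix reversal of length `ℓ`: reverse the order and negate
the sign of the first `ℓ` entries. -/
def signedPrefixRev (ℓ : ℕ) (p : List ℤ) : List ℤ :=
  (p.take ℓ).reverse.map (fun x => -x) ++ p.drop ℓ

namespace BurntPancake

def negL (l : List ℤ) : List ℤ := l.map (fun x => -x)

def rot (q : List ℤ) : List ℤ := -(q.getLastD 0) :: q.dropLast

def bpRun : List ℕ → List ℤ → List ℤ
  | [], p => p
  | ℓ :: w, p => bpRun w (signedPrefixRev ℓ p)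

def bpTrace : List ℕ → List ℤ → List (List ℤ)
  | [], p => [p]
  | ℓ :: w, p => p :: bpTrace w (signedPrefixRev ℓ p)

def bpWord : ℕ → List ℕ
  | 0 => []
  | n+1 => (List.replicate (2*n+1) (bpWord n ++ [n+1])).flatten ++ bpWord n

lemma length_spr (ℓ : ℕ) (p : List ℤ) : (signedPrefixRev ℓ p).length = p.length := by
  simp [signedPrefixRev]; omega

lemma spr_append {ℓ : ℕ} {p s : List ℤ} (h : ℓ ≤ p.length) :
    signedPrefixRev ℓ (p ++ s) = signedPrefixRev ℓ p ++ s := by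
  simp [signedPrefixRev, List.take_append_of_le_length h, List.drop_append_of_le_length h,
    List.append_assoc]

lemma spr_full (p : List ℤ) : signedPrefixRev p.length p = negL p.reverse := by
  simp [signedPrefixRev, negL]

lemma negL_negL (p : List ℤ) : negL (negL p) = p := by
  simp [negL, List.map_map, Function.comp]

lemma length_negL (p : List ℤ) : (negL p).length = p.length := by simp [negL]

lemma spr_of_length {m : ℕ} {p : List ℤ} (h : p.length = m) :
    signedPrefixRev m p = negL p.reverse := by subst h; exact spr_full p

lemma bpRun_append (u v : List ℕ) (p : List ℤ) :
    bpRun (u ++ v) p = bpRun v (bpRun u p) := by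
  induction u generalizing p with
  | nil => rfl
  | cons a u ih => simp [bpRun, ih]

lemma bpTrace_length (w : List ℕ) (p : List ℤ) : (bpTrace w p).length = w.length + 1 := by
  induction w generalizing p with
  | nil => rfl
  | cons a w ih => simp [bpTrace, ih]

lemma bpTrace_ne_nil (w : List ℕ) (p : List ℤ) : bpTrace w p ≠ [] := by
  cases w <;> simp [bpTrace]

lemma bpTrace_eq_dropLast (w : List ℕ) (p : List ℤ) :
    (bpTrace w p).dropLast ++ [bpRun w p] = bpTrace w p := by
  induction w generalizing p with
  | nil => rfl
  | cons a w ih =>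
    simp only [bpTrace, bpRun]
    rw [List.dropLast_cons_of_ne_nil (bpTrace_ne_nil _ _)]
    simp [ih]

lemma getD_zero (w : List ℕ) (p : List ℤ) : (bpTrace w p).getD 0 [] = p := by
  cases w <;> rfl

lemma run_suffix {w : List ℕ} {p : List ℤ} (s : List ℤ) (h : ∀ ℓ ∈ w, ℓ ≤ p.length) :
    bpRun w (p ++ s) = bpRun w p ++ s := by
  induction w generalizing p with
  | nil => rfl
  | cons a w ih =>
    simp only [bpRun]
    rw [spr_append (h a (by simp)), ih]
    intro ℓ hl; rw [length_spr]; exact h ℓ (by simp [hl])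

lemma trace_suffix {w : List ℕ} {p : List ℤ} (s : List ℤ) (h : ∀ ℓ ∈ w, ℓ ≤ p.length) :
    bpTrace w (p ++ s) = (bpTrace w p).map (· ++ s) := by
  induction w generalizing p with
  | nil => rfl
  | cons a w ih =>
    simp only [bpTrace, List.map_cons]
    rw [spr_append (h a (by simp)), ih]
    intro ℓ hl; rw [length_spr]; exact h ℓ (by simp [hl])

lemma word_mem : ∀ n, ∀ ℓ ∈ bpWord n, 1 ≤ ℓ ∧ ℓ ≤ n := by
  intro n
  induction n with
  | zero => simp [bpWord]
  | succ n ih =>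
    intro ℓ hl
    simp only [bpWord, List.mem_append, List.mem_flatten, List.mem_replicate] at hl
    rcases hl with ⟨l', ⟨_, rfl⟩, hm⟩ | hm
    · rcases List.mem_append.1 hm with hm | hm
      · have := ih ℓ hm; omega
      · simp at hm; omega
    · have := ih ℓ hm; omega

lemma trace_adj : ∀ (w : List ℕ) (p : List ℤ) (i : ℕ), i < w.length →
    (bpTrace w p).getD (i+1) [] = signedPrefixRev (w.getD i 0) ((bpTrace w p).getD i []) := by
  intro w
  induction w with
  | nil => simp
  | cons a w ih =>
    intro p i hi
    cases i with
    | zero =>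
      simp only [bpTrace, List.getD_cons_zero, List.getD_cons_succ, getD_zero]
    | succ i =>
      simp only [bpTrace, List.getD_cons_succ]
      exact ih (signedPrefixRev a p) i (by simpa using hi)

lemma trace_last (w : List ℕ) (p : List ℤ) :
    (bpTrace w p).getD w.length [] = bpRun w p := by
  induction w generalizing p with
  | nil => rfl
  | cons a w ih =>
    simp only [bpTrace, bpRun, List.length_cons, List.getD_cons_succ]
    exact ih _

lemma getLastD_eq {q : List ℤ} (h : q ≠ []) : q.getLastD 0 = q.getLast h := by
  rw [List.getLastD_eq_getLast?, List.getLast?_eq_getLast h]; rfl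

lemma rot_decomp {q : List ℤ} (h : q ≠ []) : q = q.dropLast ++ [q.getLastD 0] := by
  rw [getLastD_eq h]; exact (List.dropLast_append_getLast h).symm

lemma rot_length {q : List ℤ} (h : q ≠ []) : (rot q).length = q.length := by
  have := List.length_pos_iff.2 h
  simp [rot, List.length_dropLast]; omega

lemma rot_absPerm {q : List ℤ} (h : q ≠ []) :
    ((rot q).map Int.natAbs).Perm (q.map Int.natAbs) := by
  conv_rhs => rw [rot_decomp h]
  simp only [rot, List.map_cons, List.map_append, List.map_singleton, Int.natAbs_neg]
  exact (List.perm_append_singleton _ _).symm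

lemma rot_formula (q : List ℤ) : ∀ i, i ≤ q.length →
    rot^[i] q = negL (q.drop (q.length - i)) ++ q.take (q.length - i) := by
  intro i
  induction i with
  | zero => simp [negL]
  | succ i ih =>
    intro hi
    have hi' : i ≤ q.length := by omega
    set k := q.length - (i+1) with hk
    have hkl : k < q.length := by omega
    have h1 : q.length - i = k + 1 := by omega
    rw [Function.iterate_succ_apply', ih hi', h1]
    have h2 : q.take (k+1) = q.take k ++ [q[k]] := by
      rw [List.take_succ, List.getElem?_eq_getElem hkl]; rfl
    have h3 : q.drop k = q[k] :: q.drop (k+1) := List.drop_eq_getElem_cons hkl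
    rw [h2, ← List.append_assoc, rot]
    rw [List.getLastD_concat, List.dropLast_concat, h3]
    simp only [negL, List.map_cons, List.cons_append]

lemma rot_formula_last (q : List ℤ) {i k : ℕ} (hi : i < q.length)
    (hk : k = q.length - 1 - i) :
    rot^[i] q = (negL (q.drop (q.length - i)) ++ q.take k) ++ [q.getD k 0] := by
  subst hk
  have h1 : q.length - i = (q.length - 1 - i) + 1 := by omega
  rw [rot_formula q i (by omega), h1, List.take_succ,
    List.getElem?_eq_getElem (show q.length - 1 - i < q.length by omega),
    List.getD_eq_getElem q 0 (show q.length - 1 - i < q.length by omega)]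
  simp [List.append_assoc]

lemma bpTrace_append (u v : List ℕ) (p : List ℤ) :
    bpTrace (u ++ v) p = (bpTrace u p).dropLast ++ bpTrace v (bpRun u p) := by
  induction u generalizing p with
  | nil => rfl
  | cons a u ih =>
    simp only [List.cons_append, bpTrace, bpRun, List.append_eq]
    rw [List.dropLast_cons_of_ne_nil (bpTrace_ne_nil _ _), ih]
    rfl

lemma trace_rep (w : List ℕ) (m : ℕ) :
    ∀ (k : ℕ) (p : List ℤ),
    bpTrace ((List.replicate k (w ++ [m])).flatten ++ w) p
      = (List.range (k+1)).flatMap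
          (fun i => bpTrace w ((fun q => signedPrefixRev m (bpRun w q))^[i] p)) := by
  intro k
  induction k with
  | zero => intro p; simp [List.range_succ]
  | succ k ih =>
    intro p
    have hrun : bpRun (w ++ [m]) p = signedPrefixRev m (bpRun w p) := by
      rw [bpRun_append]; rfl
    have htm : bpTrace [m] (bpRun w p) = [bpRun w p, signedPrefixRev m (bpRun w p)] := rfl
    have hdrop : (bpTrace (w ++ [m]) p).dropLast = bpTrace w p := by
      rw [bpTrace_append, htm,
        show (bpTrace w p).dropLast ++ [bpRun w p, signedPrefixRev m (bpRun w p)]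
          = ((bpTrace w p).dropLast ++ [bpRun w p]) ++ [signedPrefixRev m (bpRun w p)] by simp,
        List.dropLast_concat, bpTrace_eq_dropLast]
    rw [List.replicate_succ, List.flatten_cons, List.append_assoc, bpTrace_append, hdrop, hrun,
      ih]
    conv_rhs => rw [List.range_succ_eq_map, List.flatMap_cons, List.flatMap_map]
    simp only [Function.iterate_zero_apply, Function.comp_def, Function.iterate_succ_apply]

lemma run_rep (w : List ℕ) (m : ℕ) :
    ∀ (k : ℕ) (p : List ℤ),
    bpRun ((List.replicate k (w ++ [m])).flatten) p
      = (fun q => signedPrefixRev m (bpRun w q))^[k] p := by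
  intro k
  induction k with
  | zero => intro p; rfl
  | succ k ih =>
    intro p
    rw [List.replicate_succ, List.flatten_cons, bpRun_append, ih,
      Function.iterate_succ_apply]
    congr 1
    rw [bpRun_append]
    rfl

lemma tInj_aux (n : ℕ) (p : List ℤ) (hplen : p.length = n+1) (hnz : ∀ x ∈ p, x ≠ 0)
    (hnd : (p.map Int.natAbs).Nodup) (t : ℕ → ℤ)
    (tval1 : ∀ i, i ≤ n → t i = p.getD (n - i) 0)
    (tval2 : ∀ i, i ≤ n → t (n+1+i) = -(p.getD (n - i) 0)) :
    ∀ i j, i < 2*n+2 → j < 2*n+2 → t i = t j → i = j := by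
  have pnz : ∀ a, a < p.length → p.getD a 0 ≠ 0 := by
    intro a ha
    rw [List.getD_eq_getElem _ _ ha]
    exact hnz _ (List.getElem_mem _)
  have pAbs : ∀ a b, a < p.length → b < p.length →
      (p.getD a 0).natAbs = (p.getD b 0).natAbs → a = b := by
    intro a b ha hb hab
    rw [List.getD_eq_getElem _ _ ha, List.getD_eq_getElem _ _ hb] at hab
    have h1 : (p.map Int.natAbs)[a]'(by simpa using ha)
        = (p.map Int.natAbs)[b]'(by simpa using hb) := by simpa using hab
    exact (hnd.getElem_inj_iff).1 h1
  intro i j hi hj hij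
  rcases Nat.lt_or_ge i (n+1) with hi1 | hi1 <;> rcases Nat.lt_or_ge j (n+1) with hj1 | hj1
  · rw [tval1 i (by omega), tval1 j (by omega)] at hij
    have := pAbs (n-i) (n-j) (by omega) (by omega) (by rw [hij])
    omega
  · obtain ⟨j', rfl⟩ : ∃ j', j = n+1+j' := ⟨j - (n+1), by omega⟩
    rw [tval1 i (by omega), tval2 j' (by omega)] at hij
    have heq := pAbs (n-i) (n-j') (by omega) (by omega) (by rw [hij, Int.natAbs_neg])
    rw [heq] at hij
    exact absurd (by omega : p.getD (n - j') 0 = 0) (pnz _ (by omega))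
  · obtain ⟨i', rfl⟩ : ∃ i', i = n+1+i' := ⟨i - (n+1), by omega⟩
    rw [tval2 i' (by omega), tval1 j (by omega)] at hij
    have heq := pAbs (n-i') (n-j) (by omega) (by omega) (by rw [← hij, Int.natAbs_neg])
    rw [heq] at hij
    exact absurd (by omega : p.getD (n - j) 0 = 0) (pnz _ (by omega))
  · obtain ⟨i', rfl⟩ : ∃ i', i = n+1+i' := ⟨i - (n+1), by omega⟩
    obtain ⟨j', rfl⟩ : ∃ j', j = n+1+j' := ⟨j - (n+1), by omega⟩
    rw [tval2 i' (by omega), tval2 j' (by omega)] at hij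
    have := pAbs (n-i') (n-j') (by omega) (by omega)
      (by rw [show p.getD (n-i') 0 = p.getD (n-j') 0 by omega])
    omega

lemma tSurj_aux (n : ℕ) (p : List ℤ) (hplen : p.length = n+1) (t : ℕ → ℤ)
    (tval1 : ∀ i, i ≤ n → t i = p.getD (n - i) 0)
    (tval2 : ∀ i, i ≤ n → t (n+1+i) = -(p.getD (n - i) 0)) :
    ∀ x : ℤ, x ≠ 0 → x.natAbs ∈ p.map Int.natAbs → ∃ i, i < 2*n+2 ∧ t i = x := by
  intro x hx hmem
  obtain ⟨y, hy, hyx⟩ := List.mem_map.1 hmem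
  obtain ⟨k, hk, rfl⟩ := List.mem_iff_getElem.1 hy
  have hky : p.getD k 0 = p[k]'hk := List.getD_eq_getElem _ _ hk
  rcases Int.natAbs_eq_natAbs_iff.1 hyx with h | h
  · exact ⟨n - k, by omega,
      by rw [tval1 (n-k) (by omega), show n-(n-k) = k by omega, hky, h]⟩
  · refine ⟨n+1+(n-k), by omega, ?_⟩
    rw [tval2 (n-k) (by omega), show n-(n-k) = k by omega, hky]
    omega

theorem bpMain : ∀ (n : ℕ) (p : List ℤ), p.length = n → (∀ x ∈ p, x ≠ 0) →
    (p.map Int.natAbs).Nodup →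
    (bpTrace (bpWord n) p).length = 2^n * n.factorial ∧
    (bpTrace (bpWord n) p).Nodup ∧
    (∀ q, (q.map Int.natAbs).Perm (p.map Int.natAbs) → q ∈ bpTrace (bpWord n) p) ∧
    bpRun (bpWord n) p = negL p.reverse := by
  intro n
  induction n with
  | zero =>
    intro p hl _ _
    rw [List.length_eq_zero_iff] at hl; subst hl
    refine ⟨rfl, by simp [bpWord, bpTrace], ?_, rfl⟩
    intro q hq
    simp only [List.map_nil] at hq
    have h1 : q.map Int.natAbs = [] := hq.eq_nil
    rw [List.map_eq_nil_iff] at h1; subst h1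
    simp [bpWord, bpTrace]
  | succ n ih =>
    intro p hl hnz hnd
    set w := bpWord n with hw
    have hwb : ∀ ℓ ∈ w, 1 ≤ ℓ ∧ ℓ ≤ n := word_mem n
    have hplen : p.length = n+1 := hl
    -- invariants of rot iterates
    have inv : ∀ i : ℕ, (rot^[i] p).length = n+1 ∧
        ((rot^[i] p).map Int.natAbs).Perm (p.map Int.natAbs) := by
      intro i
      induction i with
      | zero => exact ⟨hplen, List.Perm.refl _⟩
      | succ i ih2 =>
        obtain ⟨hL, hP⟩ := ih2
        have hne : rot^[i] p ≠ [] := by intro h; rw [h] at hL; simp at hL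
        rw [Function.iterate_succ_apply']
        exact ⟨by rw [rot_length hne, hL], (rot_absPerm hne).trans hP⟩
    have invne : ∀ i, rot^[i] p ≠ [] := by
      intro i h
      have := (inv i).1; rw [h] at this; simp at this
    have invnz : ∀ i, ∀ x ∈ rot^[i] p, x ≠ 0 := by
      intro i x hx hx0
      subst hx0
      have h1 : (0:ℤ).natAbs ∈ (rot^[i] p).map Int.natAbs := List.mem_map_of_mem hx
      have h2 : (0:ℤ).natAbs ∈ p.map Int.natAbs := ((inv i).2.mem_iff).1 h1
      obtain ⟨y, hy, hy0⟩ := List.mem_map.1 h2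
      exact hnz y hy (Int.natAbs_eq_zero.1 hy0)
    have invnd : ∀ i, ((rot^[i] p).map Int.natAbs).Nodup := fun i => ((inv i).2.nodup_iff).2 hnd
    have dl_len : ∀ i, ((rot^[i] p).dropLast).length = n := by
      intro i; rw [List.length_dropLast, (inv i).1]; omega
    have dl_nz : ∀ i, ∀ x ∈ (rot^[i] p).dropLast, x ≠ 0 := fun i x hx =>
      invnz i x ((List.dropLast_sublist _).subset hx)
    have dl_nd : ∀ i, (((rot^[i] p).dropLast).map Int.natAbs).Nodup := fun i =>
      List.Nodup.sublist ((List.dropLast_sublist (rot^[i] p)).map Int.natAbs) (invnd i)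
    have ihblock := fun i => ih ((rot^[i] p).dropLast) (dl_len i) (dl_nz i) (dl_nd i)
    have hwle : ∀ i, ∀ ℓ ∈ w, ℓ ≤ ((rot^[i] p).dropLast).length := by
      intro i ℓ hℓ; rw [dl_len i]; exact (hwb ℓ hℓ).2
    set t : ℕ → ℤ := fun i => (rot^[i] p).getLastD 0 with ht
    -- the step map equals rot on iterates
    have stepEq : ∀ i, signedPrefixRev (n+1) (bpRun w (rot^[i] p)) = rot (rot^[i] p) := by
      intro i
      have h1 : bpRun w (rot^[i] p)
          = negL ((rot^[i] p).dropLast.reverse) ++ [(rot^[i] p).getLastD 0] := by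
        conv_lhs => rw [rot_decomp (invne i)]
        rw [run_suffix _ (hwle i), (ihblock i).2.2.2]
      rw [h1, spr_of_length (by
        simp only [List.length_append, negL, List.length_map, List.length_reverse,
          dl_len i, List.length_singleton]), rot]
      simp [negL, List.reverse_append, List.map_map, Function.comp]
    have sEq : ∀ i, (fun q => signedPrefixRev (n+1) (bpRun w q))^[i] p = rot^[i] p := by
      intro i
      induction i with
      | zero => rfl
      | succ i ih2 =>
        rw [Function.iterate_succ_apply', Function.iterate_succ_apply', ih2]
        exact stepEq i
    -- block decomposition
    have hb : ∀ i, bpTrace w (rot^[i] p)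
        = (bpTrace w ((rot^[i] p).dropLast)).map (· ++ [t i]) := by
      intro i
      conv_lhs => rw [rot_decomp (invne i)]
      exact trace_suffix _ (hwle i)
    have hdecomp : bpTrace (bpWord (n+1)) p
        = (List.range (2*n+1+1)).flatMap (fun i =>
            (bpTrace w ((rot^[i] p).dropLast)).map (· ++ [t i])) := by
      show bpTrace ((List.replicate (2*n+1) (w ++ [n+1])).flatten ++ w) p = _
      rw [trace_rep]
      simp only [sEq, hb]
    -- values of t
    have tval1 : ∀ i, i ≤ n → t i = p.getD (n - i) 0 := by
      intro i hi
      show (rot^[i] p).getLastD 0 = _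
      rw [rot_formula_last p (show i < p.length by omega) (show n - i = p.length - 1 - i by omega),
        List.getLastD_concat]
    have hmid : rot^[n+1] p = negL p := by
      rw [rot_formula p (n+1) (by omega)]
      simp [hplen]
    have tval2 : ∀ i, i ≤ n → t (n+1+i) = -(p.getD (n - i) 0) := by
      intro i hi
      show (rot^[n+1+i] p).getLastD 0 = _
      rw [show n+1+i = i + (n+1) by omega, Function.iterate_add_apply, hmid,
        rot_formula_last (negL p) (show i < (negL p).length by rw [length_negL]; omega)
          (show n - i = (negL p).length - 1 - i by rw [length_negL]; omega),
        List.getLastD_concat]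
      have hni : n - i < p.length := by omega
      rw [List.getD_eq_getElem _ _ (show n - i < (negL p).length by rw [length_negL]; omega),
        List.getD_eq_getElem _ _ hni]
      simp [negL]
    have pAbs : ∀ {a b : ℕ} (ha : a < p.length) (hb : b < p.length),
        (p[a]'ha).natAbs = (p[b]'hb).natAbs → a = b := by
      intro a b ha hb hab
      have h1 : (p.map Int.natAbs)[a]'(by simpa using ha)
          = (p.map Int.natAbs)[b]'(by simpa using hb) := by simpa using hab
      exact (hnd.getElem_inj_iff).1 h1
    have tInj : ∀ i j, i < 2*n+2 → j < 2*n+2 → t i = t j → i = j :=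
      tInj_aux n p hplen hnz hnd t tval1 tval2
    have tSurj : ∀ x : ℤ, x ≠ 0 → x.natAbs ∈ p.map Int.natAbs → ∃ i, i < 2*n+2 ∧ t i = x :=
      tSurj_aux n p hplen t tval1 tval2
    refine ⟨?_, ?_, ?_, ?_⟩
    · rw [hdecomp, List.length_flatMap]
      rw [List.sum_eq_card_nsmul _ (2^n * n.factorial) ?_]
      · simp only [List.length_map, List.length_range, smul_eq_mul]
        rw [Nat.factorial_succ, pow_succ]
        ring
      · intro x hx
        obtain ⟨i, _, rfl⟩ := List.mem_map.1 hx
        simp only [Function.comp_apply, List.length_map]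
        exact (ihblock i).1
    · rw [hdecomp, List.nodup_flatMap]
      constructor
      · intro i _
        exact List.Nodup.map (List.append_left_injective [t i]) (ihblock i).2.1
      · rw [List.pairwise_iff_getElem]
        intro a b ha hb hab
        simp only [List.length_range] at ha hb
        simp only [List.getElem_range]
        intro x hxa hxb
        obtain ⟨u, _, rfl⟩ := List.mem_map.1 hxa
        obtain ⟨v, _, hveq⟩ := List.mem_map.1 hxb
        have hteq : t b = t a := by
          have := congrArg (fun l => l.getLastD 0) hveq
          simpa [List.getLastD_concat] using this
        have := tInj a b (by omega) (by omega) hteq.symm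
        omega
    · intro q hq
      have hql : q.length = n+1 := by
        have h1 := hq.length_eq
        simpa [hplen] using h1
      have hqne : q ≠ [] := by intro h; rw [h] at hql; simp at hql
      have hxq : q.getLastD 0 ∈ q := by
        rw [getLastD_eq hqne]; exact List.getLast_mem hqne
      have hx0 : q.getLastD 0 ≠ 0 := by
        intro h0
        have h1 : (q.getLastD 0).natAbs ∈ p.map Int.natAbs :=
          hq.subset (List.mem_map_of_mem hxq)
        rw [h0] at h1
        obtain ⟨y, hy, hy0⟩ := List.mem_map.1 h1
        exact hnz y hy (Int.natAbs_eq_zero.1 hy0)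
      have hxm : (q.getLastD 0).natAbs ∈ p.map Int.natAbs :=
        hq.subset (List.mem_map_of_mem hxq)
      obtain ⟨i, hi, hti⟩ := tSurj _ hx0 hxm
      rw [hdecomp]
      refine List.mem_flatMap.2 ⟨i, List.mem_range.2 (by omega), ?_⟩
      have hq3 : q = q.dropLast ++ [t i] := by rw [hti]; exact rot_decomp hqne
      rw [hq3]
      refine List.mem_map.2 ⟨q.dropLast, ?_, rfl⟩
      refine (ihblock i).2.2.1 _ ?_
      have hgi : rot^[i] p = (rot^[i] p).dropLast ++ [t i] := rot_decomp (invne i)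
      have e1 : q.map Int.natAbs = q.dropLast.map Int.natAbs ++ [(t i).natAbs] := by
        conv_lhs => rw [hq3]
        simp
      have e2 : (rot^[i] p).map Int.natAbs
          = ((rot^[i] p).dropLast).map Int.natAbs ++ [(t i).natAbs] := by
        conv_lhs => rw [hgi]
        simp
      have h1 : (q.dropLast.map Int.natAbs ++ [(t i).natAbs]).Perm
          (((rot^[i] p).dropLast).map Int.natAbs ++ [(t i).natAbs]) := by
        rw [← e1, ← e2]
        exact hq.trans (inv i).2.symm
      exact (((List.perm_append_singleton _ _).symm.trans h1).trans
        (List.perm_append_singleton _ _)).cons_inv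
    · show bpRun ((List.replicate (2*n+1) (w ++ [n+1])).flatten ++ w) p = _
      rw [bpRun_append, run_rep, sEq (2*n+1), show 2*n+1 = n + (n+1) by omega,
        Function.iterate_add_apply, hmid, rot_formula (negL p) n (by rw [length_negL]; omega),
        show (negL p).length - n = 1 by rw [length_negL]; omega]
      obtain ⟨a, p', rfl⟩ : ∃ a p', p = a :: p' := by
        cases p with
        | nil => exact absurd hplen (by simp)
        | cons a p' => exact ⟨a, p', rfl⟩
      have hp'len : p'.length = n := by simpa using hplen
      have h1 : negL ((negL (a :: p')).drop 1) ++ (negL (a :: p')).take 1 = p' ++ [-a] := by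
        simp [negL, List.map_map, Function.comp]
      rw [h1, run_suffix _ (fun ℓ hℓ => by rw [hp'len]; exact (hwb ℓ hℓ).2),
        (ih p' hp'len (fun x hx => hnz x (by simp [hx]))
          (by have := hnd; simpa using this.of_cons)).2.2.2]
      simp [negL]

end BurntPancake

lemma count_one_of_nodup_mem {α} [BEq α] [LawfulBEq α] {l : List α} (h : l.Nodup) {a : α}
    (ha : a ∈ l) : l.count a = 1 := by
  induction l with
  | nil => simp at ha
  | cons b l ih =>
    rcases List.mem_cons.1 ha with rfl | ha'
    · rw [List.count_cons_self, List.count_eq_zero.2 (List.nodup_cons.1 h).1]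
    · have hba : a ≠ b := by
        rintro rfl; exact (List.nodup_cons.1 h).1 ha'
      rw [List.count_cons_of_ne hba.symm, ih (List.nodup_cons.1 h).2 ha']

open BurntPancake

/-- For `n ≥ 2`, the burnt pancake network `B_n` has a Hamilton
cycle: there is a cyclic ordering of all `2ⁿ·n!` signed permutations of `{1,…,n}` in
which every two consecutive ones differ by a sign-complementing prefix reversal of some
length `1 ≤ ℓ ≤ n`. -/
theorem burnt_pancake_hamilton (n : ℕ) (hn : 2 ≤ n) :
    ∃ L : List (List ℤ),
      L.length = 2 ^ n * n.factorial ∧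
      (∀ p, IsSignedPerm n p → L.count p = 1) ∧
      ∀ i < L.length, ∃ ℓ, 1 ≤ ℓ ∧ ℓ ≤ n ∧
        L.getD ((i + 1) % L.length) [] = signedPrefixRev ℓ (L.getD i []) := by
  set p0 : List ℤ := (List.range n).map (fun i : ℕ => (i : ℤ) + 1) with hp0
  have hlen : p0.length = n := by simp [hp0]
  have hcast : ∀ i : ℕ, ((i:ℤ)+1).natAbs = i + 1 := fun i => by
    rw [show ((i:ℤ)+1) = ((i+1:ℕ):ℤ) by push_cast; ring, Int.natAbs_natCast]
  have habs : p0.map Int.natAbs = (List.range n).map (· + 1) := by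
    rw [hp0, List.map_map]
    refine List.map_congr_left (fun i _ => ?_)
    simp only [Function.comp_apply]
    exact hcast i
  have hnz : ∀ x ∈ p0, x ≠ 0 := by
    intro x hx
    rw [hp0] at hx
    obtain ⟨i, _, rfl⟩ := List.mem_map.1 hx
    intro h0
    omega
  have hnd : (p0.map Int.natAbs).Nodup := by
    rw [habs]
    exact List.Nodup.map (fun a b h => by omega) List.nodup_range
  obtain ⟨h1, h2, h3, h4⟩ := bpMain n p0 hlen hnz hnd
  refine ⟨bpTrace (bpWord n) p0, h1, ?_, ?_⟩
  · intro q hq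
    exact count_one_of_nodup_mem h2 (h3 q (by rw [habs]; exact hq.1))
  · intro i hi
    have hLlen : (bpTrace (bpWord n) p0).length = (bpWord n).length + 1 :=
      bpTrace_length _ _
    by_cases hilt : i + 1 < (bpTrace (bpWord n) p0).length
    · have hiw : i < (bpWord n).length := by omega
      have hmem : (bpWord n).getD i 0 ∈ bpWord n := by
        rw [List.getD_eq_getElem _ _ hiw]; exact List.getElem_mem _
      refine ⟨(bpWord n).getD i 0, (word_mem n _ hmem).1, (word_mem n _ hmem).2, ?_⟩
      rw [Nat.mod_eq_of_lt hilt]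
      exact trace_adj (bpWord n) p0 i hiw
    · have hieq : i + 1 = (bpTrace (bpWord n) p0).length := by omega
      refine ⟨n, by omega, le_refl n, ?_⟩
      rw [hieq, Nat.mod_self]
      have hi' : i = (bpWord n).length := by omega
      rw [getD_zero, hi', trace_last, h4,
        spr_of_length (by simp [negL, hlen])]
      simp [negL, List.map_map, Function.comp, List.map_reverse]
end

section
/- Let n ≥ 1, k ≥ 1, and let π be an increasing k-coloured permutation of order n. Write Rec(π,k) as the concatenation of the nk sublists Rec(ρ(π)_m,k)·r_m, Rec(ρ(π)_{m−1},k)·r_{m−1}, …, Rec(ρ(π)_1,k)·r_1 where m = nk. Then for every i ∈ {1,…,m}, the last permutation of the sublist Rec(ρ(π)_i,k)·r_i is decreasing, and it is the only decreasing permutation occurring in that sublist. -/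
/-- A coloured permutation is increasing if it is a length-`n` subword of the circular
string `ρ(1⁰2⁰⋯n⁰)`; equivalently, each symbol is followed either by the next value with
the same colour, or (when its value is `n`) by value `1` with colour decremented mod `k`. -/
def IsIncreasing (n k : ℕ) (p : List (ℕ × ℕ)) : Prop :=
  IsCPerm n k p ∧ ∀ i, i + 1 < p.length →
    ((p.getD i (0,0)).1 < n ∧ (p.getD (i+1) (0,0)).1 = (p.getD i (0,0)).1 + 1 ∧
      (p.getD (i+1) (0,0)).2 = (p.getD i (0,0)).2) ∨
    ((p.getD i (0,0)).1 = n ∧ (p.getD (i+1) (0,0)).1 = 1 ∧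
      (p.getD (i+1) (0,0)).2 = ((p.getD i (0,0)).2 + k - 1) % k)

/-- A permutation is decreasing if it is the reversal of an increasing permutation. -/
def IsDecreasing (n k : ℕ) (p : List (ℕ × ℕ)) : Prop := IsIncreasing n k p.reverse

/-- A pre-perm is decreasing if it is a subsequence of a decreasing permutation. -/
def IsDecreasingPre (n k : ℕ) (p : List (ℕ × ℕ)) : Prop :=
  ∃ q, IsDecreasing n k q ∧ p.Sublist q

namespace SUD16

/-- The circular successor map. -/
def step (n k : ℕ) (x : ℕ × ℕ) : ℕ × ℕ :=
  if x.1 < n then (x.1 + 1, x.2) else (1, (x.2 + k - 1) % k)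

def incFrom (n k : ℕ) (x : ℕ × ℕ) : List (ℕ × ℕ) :=
  (List.range n).map (fun j => (step n k)^[j] x)

lemma getD_range_map {α} (d : α) (f : ℕ → α) {t m : ℕ} (h : t < m) :
    ((List.range m).map f).getD t d = f t := by
  rw [List.getD_eq_getElem _ _ (by simpa using h)]
  simp

lemma map_eq_range_map {α} (f : (ℕ × ℕ) → α) (p : List (ℕ × ℕ)) :
    p.map f = (List.range p.length).map (fun j => f (p.getD j (0,0))) := by
  apply List.ext_getElem
  · simp
  · intro i h1 h2
    simp only [List.getElem_map, List.getElem_range]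
    rw [List.getD_eq_getElem]

lemma step_shift {k : ℕ} (hk : 1 ≤ k) (n s : ℕ) (x : ℕ × ℕ) :
    step n k (x.1, (x.2 + s) % k) = ((step n k x).1, ((step n k x).2 + s) % k) := by
  unfold step
  by_cases h : x.1 < n
  · simp [h]
  · simp only [h, if_false]
    refine Prod.ext rfl ?_
    simp only
    have e1 : (x.2 + s) % k + k - 1 = (x.2 + s) % k + (k-1) := by omega
    have e2 : x.2 + k - 1 = x.2 + (k-1) := by omega
    rw [e1, e2, Nat.mod_add_mod, Nat.mod_add_mod]
    congr 1
    omega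

lemma step_iterate_shift {k : ℕ} (hk : 1 ≤ k) (n s j : ℕ) (x : ℕ × ℕ) :
    (step n k)^[j] (x.1, (x.2 + s) % k) = (((step n k)^[j] x).1, (((step n k)^[j] x).2 + s) % k) := by
  induction j with
  | zero => simp
  | succ j ih =>
    rw [Function.iterate_succ_apply', Function.iterate_succ_apply', ih, step_shift hk]

lemma step_iterate {n k : ℕ} (hn : 1 ≤ n) (hk : 1 ≤ k) {x : ℕ × ℕ}
    (hx1 : 1 ≤ x.1) (hx2 : x.1 ≤ n) (hxc : x.2 < k) (j : ℕ) :
    (step n k)^[j] x = ((x.1 - 1 + j) % n + 1, (x.2 + (k-1) * ((x.1 - 1 + j) / n)) % k) := by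
  induction j with
  | zero =>
    simp only [Function.iterate_zero, id_eq, Nat.add_zero]
    rw [Nat.mod_eq_of_lt (by omega : x.1 - 1 < n), Nat.div_eq_of_lt (by omega : x.1 - 1 < n),
      Nat.mul_zero, Nat.add_zero]
    exact Prod.ext (by show x.1 = x.1 - 1 + 1; omega) (by show x.2 = x.2 % k; exact (Nat.mod_eq_of_lt hxc).symm)
  | succ j ih =>
    rw [Function.iterate_succ_apply', ih]
    have hqr : n * ((x.1 - 1 + j) / n) + (x.1 - 1 + j) % n = x.1 - 1 + j := Nat.div_add_mod _ n
    set q := (x.1 - 1 + j) / n with hq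
    set r := (x.1 - 1 + j) % n with hr
    have hrn : r < n := Nat.mod_lt _ (by omega)
    by_cases hc : r + 1 < n
    · have hsucc : x.1 - 1 + (j+1) = n * q + (r+1) := by omega
      rw [hsucc]
      unfold step
      rw [if_pos (by simpa using hc)]
      rw [Nat.mul_add_mod, Nat.mod_eq_of_lt hc, Nat.mul_add_div (by omega), Nat.div_eq_of_lt hc,
        Nat.add_zero]
      simp
    · have hrn1 : r + 1 = n := by omega
      have hnq : n * (q+1) = n * q + n := Nat.mul_succ n q
      have hsucc : x.1 - 1 + (j+1) = n * (q+1) := by omega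
      rw [hsucc]
      unfold step
      rw [if_neg (show ¬((r + 1, (x.2 + (k - 1) * q) % k) : ℕ × ℕ).1 < n from by
        show ¬(r + 1 < n); omega)]
      rw [Nat.mul_mod_right, Nat.mul_div_cancel_left _ (by omega : 0 < n)]
      refine Prod.ext (by simp) ?_
      simp only
      have e1 : (x.2 + (k-1) * q) % k + k - 1 = (x.2 + (k-1) * q) % k + (k-1) := by omega
      rw [e1, Nat.mod_add_mod, Nat.mul_succ]
      congr 1
      omega

lemma step_iterate_valid {n k : ℕ} (hn : 1 ≤ n) (hk : 1 ≤ k) {x : ℕ × ℕ}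
    (hx1 : 1 ≤ x.1) (hx2 : x.1 ≤ n) (hxc : x.2 < k) (j : ℕ) :
    1 ≤ ((step n k)^[j] x).1 ∧ ((step n k)^[j] x).1 ≤ n ∧ ((step n k)^[j] x).2 < k := by
  rw [step_iterate hn hk hx1 hx2 hxc]
  refine ⟨by omega, ?_, Nat.mod_lt _ (by omega)⟩
  have := Nat.mod_lt (x.1 - 1 + j) (show 0 < n by omega)
  omega

lemma step_iterate_n {n k : ℕ} (hn : 1 ≤ n) (hk : 1 ≤ k) {x : ℕ × ℕ}
    (hx1 : 1 ≤ x.1) (hx2 : x.1 ≤ n) (hxc : x.2 < k) :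
    (step n k)^[n] x = (x.1, (x.2 + (k-1)) % k) := by
  rw [step_iterate hn hk hx1 hx2 hxc]
  rw [Nat.add_mod_right, Nat.mod_eq_of_lt (by omega : x.1 - 1 < n),
    Nat.add_div_right _ (by omega : 0 < n), Nat.div_eq_of_lt (by omega : x.1 - 1 < n)]
  refine Prod.ext (by simp; omega) (by simp)

lemma step_iterate_nk {n k : ℕ} (hn : 1 ≤ n) (hk : 1 ≤ k) {x : ℕ × ℕ}
    (hx1 : 1 ≤ x.1) (hx2 : x.1 ≤ n) (hxc : x.2 < k) :
    (step n k)^[n * k] x = x := by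
  rw [step_iterate hn hk hx1 hx2 hxc]
  rw [Nat.add_mul_mod_self_left, Nat.mod_eq_of_lt (by omega : x.1 - 1 < n)]
  rw [Nat.add_mul_div_left _ _ (by omega : 0 < n), Nat.div_eq_of_lt (by omega : x.1 - 1 < n),
    Nat.zero_add, Nat.add_mul_mod_self_right, Nat.mod_eq_of_lt hxc]
  refine Prod.ext (by simp; omega) rfl

lemma step_iterate_mod {n k : ℕ} (hn : 1 ≤ n) (hk : 1 ≤ k) {x : ℕ × ℕ}
    (hx1 : 1 ≤ x.1) (hx2 : x.1 ≤ n) (hxc : x.2 < k) (a : ℕ) :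
    (step n k)^[a] x = (step n k)^[a % (n * k)] x := by
  conv_lhs => rw [← Nat.div_add_mod a (n * k)]
  rw [Nat.add_comm, Function.iterate_add_apply]
  congr 1
  rw [Function.iterate_mul]
  exact Function.iterate_fixed (step_iterate_nk hn hk hx1 hx2 hxc) _

lemma flatMap_blocks (k : ℕ) (p : List (ℕ × ℕ)) (hL : 0 < p.length) (m : ℕ) :
    ((List.range m).reverse).flatMap (fun s => colShift k s p) =
      (List.range (m * p.length)).map (fun j =>
        ((p.getD (j % p.length) (0,0)).1,
         ((p.getD (j % p.length) (0,0)).2 + (m - 1 - j / p.length)) % k)) := by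
  induction m with
  | zero => simp
  | succ m ih =>
    rw [List.range_succ, List.reverse_append, List.reverse_singleton, List.singleton_append,
      List.flatMap_cons, ih]
    rw [show (m + 1) * p.length = p.length + m * p.length by ring, List.range_add,
      List.map_append]
    congr 1
    · show colShift k m p = _
      unfold colShift
      rw [map_eq_range_map (fun x => (x.1, (x.2 + m) % k)) p]
      apply List.map_congr_left
      intro j hj
      simp only [List.mem_range] at hj
      rw [Nat.mod_eq_of_lt hj, Nat.div_eq_of_lt hj]
      simp
    · rw [List.map_map]
      apply List.map_congr_left
      intro j hj
      simp only [List.mem_range] at hj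
      simp only [Function.comp]
      rw [Nat.add_mod_left, Nat.add_comm p.length j, Nat.add_div_right _ hL]
      congr 3
      omega

lemma rho_getD {k : ℕ} (p : List (ℕ × ℕ)) (hL : 0 < p.length) {j : ℕ}
    (hj : j < k * p.length) :
    (rho k p).getD j (0,0) =
      ((p.getD (j % p.length) (0,0)).1,
       ((p.getD (j % p.length) (0,0)).2 + (k - 1 - j / p.length)) % k) := by
  unfold rho
  rw [flatMap_blocks k p hL k, getD_range_map _ _ hj]

lemma getLast?_range_map {α} {k : ℕ} (f : ℕ → α) (hk : 1 ≤ k) :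
    ((List.range k).map f).getLast? = some (f (k-1)) := by
  conv_lhs => rw [show k = (k-1)+1 by omega, List.range_succ, List.map_append]
  simp

lemma recAux_getLast {k : ℕ} (hk : 1 ≤ k) :
    ∀ j (p : List (ℕ × ℕ)), p.length = j →
      (RecAux k j p).getLast? = some ((colShift k (k-1) p).reverse) := by
  intro j
  induction j using Nat.strong_induction_on with
  | _ j ih =>
    rcases j with _ | j'
    · intro p hp
      have hpe : p = [] := List.length_eq_zero_iff.mp hp
      subst hpe
      simp only [RecAux]
      rw [getLast?_range_map _ hk]
      simp [colShift]
    · intro p hp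
      by_cases h1 : p.length ≤ 1
      · simp only [RecAux, if_pos h1]
        rw [getLast?_range_map _ hk]
        obtain ⟨a, ha⟩ := List.length_eq_one_iff.mp (by omega : p.length = 1)
        subst ha
        simp [colShift]
      · simp only [RecAux, if_neg h1]
        set L := p.length with hLdef
        have hL2 : 2 ≤ L := by omega
        have hm : 1 ≤ k * L := by
          calc 1 = 1 * 1 := rfl
          _ ≤ k * L := Nat.mul_le_mul hk (by omega)
        have hdecomp : (List.range (k*L)).reverse
            = ((List.range (k*L-1)).map Nat.succ).reverse ++ [0] := by
          conv_lhs => rw [show k*L = (k*L-1)+1 by omega, List.range_succ_eq_map]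
          rw [List.reverse_cons]
        rw [hdecomp, List.flatMap_append, List.flatMap_cons, List.flatMap_nil, List.append_nil]
        have hlen : (rhoSub k p 1).length = j' := by
          simp only [rhoSub, List.length_map, List.length_range]
          omega
        have hih := ih j' (Nat.lt_succ_self j') (rhoSub k p 1) hlen
        have hmap : ((RecAux k j' (rhoSub k p (0+1))).map
              (fun q => q ++ [(rho k p).getD 0 (0,0)])).getLast?
            = some ((colShift k (k-1) (rhoSub k p 1)).reverse ++ [(rho k p).getD 0 (0,0)]) := by
          rw [List.getLast?_map]
          simp only [Nat.zero_add]
          rw [hih]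
          rfl
        have hr0 : (rho k p).getD 0 (0,0)
            = ((p.getD 0 (0,0)).1, ((p.getD 0 (0,0)).2 + (k-1)) % k) := by
          rw [rho_getD p (by omega) (by rw [← hLdef]; omega : 0 < k * p.length)]
          simp
        have hcs : colShift k (k-1) p
            = ((p.getD 0 (0,0)).1, ((p.getD 0 (0,0)).2 + (k-1)) % k) ::
              (List.range (L-1)).map (fun t =>
                ((p.getD (t+1) (0,0)).1, ((p.getD (t+1) (0,0)).2 + (k-1)) % k)) := by
          show p.map _ = _
          rw [map_eq_range_map (fun x => (x.1, (x.2 + (k-1)) % k)) p]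
          rw [show p.length = (L-1)+1 by omega, List.range_succ_eq_map, List.map_cons,
            List.map_map]
          rfl
        have htail : colShift k (k-1) (rhoSub k p 1)
            = (List.range (L-1)).map (fun t =>
                ((p.getD (t+1) (0,0)).1, ((p.getD (t+1) (0,0)).2 + (k-1)) % k)) := by
          show (rhoSub k p 1).map _ = _
          unfold rhoSub
          rw [List.map_map]
          simp only [← hLdef]
          apply List.map_congr_left
          intro t ht
          simp only [List.mem_range] at ht
          simp only [Function.comp]
          have hmul : L*(k-1) + L = L*k := by rw [← Nat.mul_succ]; congr 1; omega
          have hcomm : L*k = k*L := Nat.mul_comm L k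
          have he : 1 + t + k * L - L = L*(k-1) + (1+t) := by omega
          have hlt2 : L*(k-1) + (1+t) < k * L := by omega
          rw [he, Nat.mod_eq_of_lt hlt2]
          have hrg := rho_getD (k := k) p (by omega)
            (j := L*(k-1) + (1+t)) (by rw [← hLdef]; exact hlt2)
          rw [← hLdef] at hrg
          rw [hrg, Nat.mul_add_mod, Nat.mul_add_div (by omega : 0 < L),
            Nat.mod_eq_of_lt (by omega : 1 + t < L), Nat.div_eq_of_lt (by omega : 1 + t < L),
            Nat.add_zero, Nat.sub_self]
          rw [Nat.add_comm 1 t]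
          simp
        have hfinal : (colShift k (k-1) (rhoSub k p 1)).reverse ++ [(rho k p).getD 0 (0,0)]
            = (colShift k (k-1) p).reverse := by
          rw [hcs, List.reverse_cons, htail, hr0]
        rw [List.getLast?_append]
        rw [hmap, hfinal]
        rfl

lemma incFrom_increasing {n k : ℕ} (hn : 1 ≤ n) (hk : 1 ≤ k) {x : ℕ × ℕ}
    (hx1 : 1 ≤ x.1) (hx2 : x.1 ≤ n) (hxc : x.2 < k) :
    IsIncreasing n k (incFrom n k x) := by
  constructor
  · constructor
    · have hmap : (incFrom n k x).map Prod.fst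
          = (List.range n).map (fun j => (x.1 - 1 + j) % n + 1) := by
        unfold incFrom
        rw [List.map_map]
        apply List.map_congr_left
        intro j hj
        simp only [Function.comp]
        rw [step_iterate hn hk hx1 hx2 hxc]
      rw [hmap]
      refine (List.Subperm.perm_of_length_le ?_ (by simp)).symm
      apply List.subperm_of_subset
      · exact (List.nodup_range (n := n)).map (fun a b h => by omega)
      · intro y hy
        simp only [List.mem_map, List.mem_range] at hy ⊢
        obtain ⟨t, ht, rfl⟩ := hy
        refine ⟨(t + n - (x.1 - 1)) % n, Nat.mod_lt _ (by omega), ?_⟩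
        rw [Nat.add_mod_mod, show x.1 - 1 + (t + n - (x.1 - 1)) = t + n by omega,
          Nat.add_mod_right, Nat.mod_eq_of_lt ht]
    · intro z hz
      simp only [incFrom, List.mem_map, List.mem_range] at hz
      obtain ⟨j, hj, rfl⟩ := hz
      exact (step_iterate_valid hn hk hx1 hx2 hxc j).2.2
  · intro i hi
    have hlen' : (incFrom n k x).length = n := by simp [incFrom]
    rw [hlen'] at hi
    have g1 : (incFrom n k x).getD i (0,0) = (step n k)^[i] x := getD_range_map _ _ (by omega)
    have g2 : (incFrom n k x).getD (i+1) (0,0) = (step n k)^[i+1] x := getD_range_map _ _ hi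
    rw [g1, g2, Function.iterate_succ_apply']
    rcases Nat.lt_or_ge ((step n k)^[i] x).1 n with hc | hc
    · left
      refine ⟨hc, ?_, ?_⟩ <;> simp [step, hc]
    · right
      have hle := (step_iterate_valid hn hk hx1 hx2 hxc i).2.1
      have heq : ((step n k)^[i] x).1 = n := le_antisymm hle hc
      refine ⟨heq, ?_, ?_⟩ <;> simp [step, heq]

lemma val_range {n : ℕ} {p : List (ℕ × ℕ)} (hperm : (p.map Prod.fst).Perm ((List.range n).map (· + 1))) :
    ∀ x ∈ p, 1 ≤ x.1 ∧ x.1 ≤ n := by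
  intro x hx
  have : x.1 ∈ (List.range n).map (· + 1) := hperm.subset (List.mem_map_of_mem hx)
  simp only [List.mem_map, List.mem_range] at this
  omega

lemma increasing_eq_incFrom {n k : ℕ} (hn : 1 ≤ n) (hk : 1 ≤ k) {p : List (ℕ × ℕ)}
    (hp : IsIncreasing n k p) : p = incFrom n k (p.getD 0 (0,0)) := by
  obtain ⟨⟨hperm, hcol⟩, hstep⟩ := hp
  have hlen : p.length = n := by simpa using hperm.length_eq
  have hval := val_range hperm
  have key : ∀ j, j < n → p.getD j (0,0) = (step n k)^[j] (p.getD 0 (0,0)) := by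
    intro j hj
    induction j with
    | zero => simp
    | succ j ihj =>
      rw [Function.iterate_succ_apply', ← ihj (by omega)]
      have hs := hstep j (by omega : j + 1 < p.length)
      rcases hs with ⟨h1, h2, h3⟩ | ⟨h1, h2, h3⟩
      · rw [show step n k (p.getD j (0,0)) = ((p.getD j (0,0)).1 + 1, (p.getD j (0,0)).2) from by
          unfold step; rw [if_pos h1]]
        exact Prod.ext h2 h3
      · rw [show step n k (p.getD j (0,0)) = (1, ((p.getD j (0,0)).2 + k - 1) % k) from by
          unfold step; rw [if_neg (by omega)]]
        exact Prod.ext h2 h3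
  apply List.ext_getElem
  · simp [incFrom, hlen]
  · intro i h1 h2
    have hi : i < n := by rwa [hlen] at h1
    have hk1 := key i hi
    rw [List.getD_eq_getElem p _ h1] at hk1
    rw [hk1]
    simp [incFrom]

lemma rho_step {n k : ℕ} (hn : 1 ≤ n) (hk : 1 ≤ k) (x₀ : ℕ × ℕ)
    (hx01 : 1 ≤ x₀.1) (hx02 : x₀.1 ≤ n) (hx0c : x₀.2 < k)
    {π : List (ℕ × ℕ)} (hlen : π.length = n)
    (hpig : ∀ j, j < n → π.getD j (0,0) = (step n k)^[j] x₀) :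
    ∀ j, j < k * n → (rho k π).getD j (0,0)
      = (step n k)^[j] (x₀.1, (x₀.2 + (k-1)) % k) := by
  have hkn : k * π.length = k * n := by rw [hlen]
  intro j
  induction j with
  | zero =>
    intro hj
    have h0 := rho_getD (k := k) π (by omega) (j := 0) (by omega)
    simp only [Nat.zero_mod, Nat.zero_div, Nat.sub_zero] at h0
    rw [h0, hpig 0 (by omega)]
    simp
  | succ j ihj =>
    intro hj
    have ihj' := ihj (by omega)
    obtain ⟨q, r, hqr, hrn⟩ : ∃ q r, n*q + r = j ∧ r < n :=
      ⟨j/n, j%n, Nat.div_add_mod j n, Nat.mod_lt _ (by omega)⟩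
    have hdiv : j / n = q := by
      rw [← hqr, Nat.mul_add_div (by omega), Nat.div_eq_of_lt hrn, Nat.add_zero]
    have hmod : j % n = r := by
      rw [← hqr, Nat.mul_add_mod, Nat.mod_eq_of_lt hrn]
    have h1 := rho_getD (k := k) π (by omega) (j := j+1) (by omega)
    rw [hlen] at h1
    have h2 := rho_getD (k := k) π (by omega) (j := j) (by omega)
    rw [hlen, hmod, hdiv] at h2
    by_cases hc : r + 1 < n
    · have e1 : (j+1) % n = r + 1 := by
        rw [show j+1 = n*q + (r+1) by omega, Nat.mul_add_mod, Nat.mod_eq_of_lt hc]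
      have e2 : (j+1) / n = q := by
        rw [show j+1 = n*q + (r+1) by omega, Nat.mul_add_div (by omega),
          Nat.div_eq_of_lt hc, Nat.add_zero]
      rw [e1, e2] at h1
      rw [h1]
      have hsucc : π.getD (r+1) (0,0) = step n k (π.getD r (0,0)) := by
        rw [hpig (r+1) hc, hpig r (by omega), Function.iterate_succ_apply']
      rw [Function.iterate_succ_apply', ← ihj', h2, step_shift hk, hsucc]
    · have hms : n*(q+1) = n*q + n := Nat.mul_succ n q
      have e1 : (j+1) % n = 0 := by
        rw [show j+1 = n*(q+1) by omega, Nat.mul_mod_right]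
      have e2 : (j+1) / n = q + 1 := by
        rw [show j+1 = n*(q+1) by omega, Nat.mul_div_cancel_left _ (by omega : 0 < n)]
      rw [e1, e2] at h1
      have hq1k : q + 1 < k := by
        rw [← e2]; exact (Nat.div_lt_iff_lt_mul (by omega)).mpr (by omega)
      rw [h1, Function.iterate_succ_apply', ← ihj', h2, step_shift hk]
      have hrn1 : r = n - 1 := by omega
      have hstepn : step n k (π.getD r (0,0)) = (x₀.1, (x₀.2 + (k-1)) % k) := by
        rw [hpig r (by omega), hrn1, ← Function.iterate_succ_apply' (step n k) (n-1) x₀]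
        simp only [Nat.succ_eq_add_one]
        rw [show n-1+1 = n by omega, step_iterate_n hn hk hx01 hx02 hx0c]
      rw [hstepn]
      have h00 : π.getD 0 (0,0) = x₀ := by rw [hpig 0 (by omega)]; simp
      rw [h00]
      refine Prod.ext rfl ?_
      show (x₀.2 + (k-1-(q+1))) % k = ((x₀.2 + (k-1)) % k + (k-1-q)) % k
      rw [Nat.mod_add_mod,
        show x₀.2 + (k-1) + (k-1-q) = (x₀.2 + (k-1-(q+1))) + k by omega,
        Nat.add_mod_right]

lemma key_list {n k : ℕ} (hn : 1 ≤ n) (hk : 1 ≤ k) (y₀ : ℕ × ℕ)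
    (hy01 : 1 ≤ y₀.1) (hy02 : y₀.1 ≤ n) (hy0c : y₀.2 < k)
    {π : List (ℕ × ℕ)} (hlen : π.length = n)
    (hrho : ∀ j, j < k * n → (rho k π).getD j (0,0) = (step n k)^[j] y₀)
    {i : ℕ} (hi1 : 1 ≤ i) (hi2 : i ≤ k * n) :
    (rho k π).getD (i-1) (0,0) :: colShift k (k-1) (rhoSub k π i)
      = incFrom n k ((step n k)^[i-1] y₀) := by
  have hkn : k * n = n * k := Nat.mul_comm k n
  have hnkn : n ≤ k * n := Nat.le_mul_of_pos_left n (by omega)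
  rw [hrho (i-1) (by omega)]
  unfold incFrom
  have hdec : ∀ (m : ℕ) (f : (ℕ × ℕ) → (ℕ × ℕ)) (z : ℕ × ℕ), 1 ≤ m →
      (List.range m).map (fun j => f^[j] z)
        = z :: (List.range (m-1)).map (fun t => f^[t] (f z)) := by
    intro m f z hm
    conv_lhs => rw [show m = (m-1)+1 by omega, List.range_succ_eq_map]
    rw [List.map_cons, List.map_map]
    refine congrArg₂ _ (by simp) ?_
    apply List.map_congr_left
    intro t ht
    simp [Function.comp, Function.iterate_succ_apply]
  rw [hdec n (step n k) _ hn]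
  congr 1
  show (rhoSub k π i).map _ = _
  unfold rhoSub
  rw [List.map_map, hlen]
  apply List.map_congr_left
  intro t ht
  simp only [List.mem_range] at ht
  simp only [Function.comp]
  have hMlt : (i + t + k*n - n) % (k*n) < k*n := Nat.mod_lt _ (by omega)
  rw [hrho _ hMlt]
  show (((step n k)^[(i + t + k*n - n) % (k*n)] y₀).1,
      (((step n k)^[(i + t + k*n - n) % (k*n)] y₀).2 + (k-1)) % k)
      = (step n k)^[t] (step n k ((step n k)^[i-1] y₀))
  rw [← step_iterate_shift hk n (k-1) _ y₀]
  conv_lhs => rw [show ((y₀.1, (y₀.2 + (k-1)) % k) : ℕ × ℕ)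
      = (step n k)^[n] y₀ from (step_iterate_n hn hk hy01 hy02 hy0c).symm]
  rw [← Function.iterate_add_apply, ← Function.iterate_succ_apply' (step n k) (i-1) y₀]
  simp only [Nat.succ_eq_add_one]
  rw [← Function.iterate_add_apply]
  rw [step_iterate_mod hn hk hy01 hy02 hy0c ((i + t + k*n - n) % (k*n) + n),
    step_iterate_mod hn hk hy01 hy02 hy0c (t + (i-1+1))]
  congr 1
  rw [hkn, Nat.mod_add_mod,
    show i + t + n*k - n + n = (t + (i-1+1)) + n*k by omega,
    Nat.add_mod_right]

end SUD16

open SUD16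

/-- Let `n,k ≥ 1` and let `π` be an increasing coloured permutation
of order `n`, so that `Rec(π,k)` is the concatenation of the `m = nk` sublists
`Rec(ρ(π)_m,k)·r_m, …, Rec(ρ(π)_1,k)·r_1`. Then for every `i ∈ {1,…,m}`, the last
permutation of the sublist `Rec(ρ(π)_i,k)·r_i` is decreasing, and it is the only
decreasing permutation occurring in that sublist. -/
theorem sublist_unique_decreasing (n k : ℕ) (hn : 1 ≤ n) (hk : 1 ≤ k)
    (π : List (ℕ × ℕ)) (hπ : IsIncreasing n k π) :
    ∀ i, 1 ≤ i → i ≤ n * k →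
      ∃ last,
        ((RecList k (rhoSub k π i)).map
            (fun q => q ++ [(rho k π).getD (i - 1) (0, 0)])).getLast? = some last ∧
        IsDecreasing n k last ∧
        ∀ q ∈ (RecList k (rhoSub k π i)).map
            (fun q => q ++ [(rho k π).getD (i - 1) (0, 0)]),
          IsDecreasing n k q → q = last := by

  intro i hi1 hi2
  have hperm := hπ.1.1
  have hcol := hπ.1.2
  have hlen : π.length = n := by simpa using hperm.length_eq
  have hval := val_range hperm
  have hkn : k * n = n * k := Nat.mul_comm k n
  have hi2' : i ≤ k * n := by omega
  have hx0mem : π.getD 0 (0,0) ∈ π := by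
    rw [List.getD_eq_getElem π _ (by omega)]
    exact List.getElem_mem _
  have hx01 : 1 ≤ (π.getD 0 (0,0)).1 := (hval _ hx0mem).1
  have hx02 : (π.getD 0 (0,0)).1 ≤ n := (hval _ hx0mem).2
  have hx0c : (π.getD 0 (0,0)).2 < k := hcol _ hx0mem
  have hπeq := increasing_eq_incFrom hn hk hπ
  have hpig : ∀ j, j < n → π.getD j (0,0) = (step n k)^[j] (π.getD 0 (0,0)) := by
    intro j hj
    conv_lhs => rw [hπeq]
    exact getD_range_map _ _ hj
  have hrho := rho_step hn hk _ hx01 hx02 hx0c hlen hpig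
  have hy01 : 1 ≤ (((π.getD 0 (0,0)).1, ((π.getD 0 (0,0)).2 + (k-1)) % k) : ℕ × ℕ).1 := hx01
  have hy02 : (((π.getD 0 (0,0)).1, ((π.getD 0 (0,0)).2 + (k-1)) % k) : ℕ × ℕ).1 ≤ n := hx02
  have hy0c : (((π.getD 0 (0,0)).1, ((π.getD 0 (0,0)).2 + (k-1)) % k) : ℕ × ℕ).2 < k :=
    Nat.mod_lt _ (by omega)
  have hkey := key_list hn hk _ hy01 hy02 hy0c hlen hrho hi1 hi2'
  have hrsl : (rhoSub k π i).length = n - 1 := by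
    simp only [rhoSub, List.length_map, List.length_range, hlen]
  have hRecList : RecList k (rhoSub k π i) = RecAux k (n-1) (rhoSub k π i) := by
    unfold RecList
    rw [hrsl]
  have hlast := recAux_getLast hk (n-1) (rhoSub k π i) hrsl
  obtain ⟨hz1, hz2, hz3⟩ := step_iterate_valid hn hk hy01 hy02 hy0c (i-1)
  refine ⟨(colShift k (k-1) (rhoSub k π i)).reverse ++ [(rho k π).getD (i-1) (0,0)],
    ?_, ?_, ?_⟩
  · rw [hRecList, List.getLast?_map, hlast]
    rfl
  · show IsIncreasing n k _
    rw [show ((colShift k (k-1) (rhoSub k π i)).reverse ++ [(rho k π).getD (i-1) (0,0)]).reverse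
        = (rho k π).getD (i-1) (0,0) :: colShift k (k-1) (rhoSub k π i) from by simp]
    rw [hkey]
    exact incFrom_increasing hn hk hz1 hz2 hz3
  · intro q hq hdec
    obtain ⟨q', hq', rfl⟩ := List.mem_map.mp hq
    have h2 := increasing_eq_incFrom hn hk hdec
    rw [show (q' ++ [(rho k π).getD (i-1) (0,0)]).reverse
        = (rho k π).getD (i-1) (0,0) :: q'.reverse from by simp] at h2
    simp only [List.getD_cons_zero] at h2
    have hr : (rho k π).getD (i-1) (0,0)
        = (step n k)^[i-1] (((π.getD 0 (0,0)).1, ((π.getD 0 (0,0)).2 + (k-1)) % k) : ℕ × ℕ) :=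
      hrho (i-1) (by omega)
    rw [hr] at h2 hkey
    have hcons := h2.trans hkey.symm
    simp only [List.cons.injEq, true_and] at hcons
    rw [show q' = (colShift k (k-1) (rhoSub k π i)).reverse from by
      rw [← hcons, List.reverse_reverse]]
end
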